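/- arXiv:1007.2054 — 5 statements merged into one kernel-verified Lean document; each statement's English description precedes it below -/
import Mathlib

section
/- For a prime p and integers a, b with p ∤ ab, the square of the Kloosterman sum satisfies K(a,b)^2 = p + ∑_{l=1}^{p} (Legendre symbol ((l^2 - 4l)/p)) · K(a, lb), where K(a,b) = ∑_{x=1}^{p-1} e_p(a x + b x̄). -/
open Finset

/-- `ep p α = exp(2πiα/p)`. -/
noncomputable def ep (p : ℕ) (α : ℤ) : ℂ := Complex.exp (2 * Real.pi * Complex.I * α / p)

/-- The Kloosterman sum `K(a,b) = ∑_{x=1}^{p-1} e_p(a x + b x̄)`. -/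
noncomputable def Kl (p : ℕ) (a b : ℤ) : ℂ :=
  ∑ x ∈ Finset.Icc 1 (p - 1), ep p (a * x + b * (((x : ZMod p)⁻¹).val : ℤ))

noncomputable def psi (p : ℕ) (x : ZMod p) : ℂ := ep p x.val

lemma ep_add (p : ℕ) (m n : ℤ) : ep p (m + n) = ep p m * ep p n := by
  rw [ep, ep, ep, ← Complex.exp_add]
  congr 1
  push_cast
  ring

lemma ep_congr (p : ℕ) (hp : p ≠ 0) {m n : ℤ} (h : m ≡ n [ZMOD p]) : ep p m = ep p n := by
  obtain ⟨k, hk⟩ := h.dvd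
  have hn : n = m + p * k := by linarith [hk]
  have hpc : (p : ℂ) ≠ 0 := Nat.cast_ne_zero.mpr hp
  rw [hn, ep_add]
  have : ep p ((p : ℤ) * k) = 1 := by
    rw [ep]
    have : 2 * (Real.pi : ℂ) * Complex.I * (((p : ℤ) * k : ℤ) : ℂ) / p
        = (k : ℤ) * (2 * Real.pi * Complex.I) := by
      push_cast
      field_simp
    rw [this, Complex.exp_int_mul_two_pi_mul_I]
  rw [this, mul_one]

lemma psi_intCast (p : ℕ) [NeZero p] (m : ℤ) : psi p ((m : ZMod p)) = ep p m := by
  apply ep_congr p (NeZero.ne p)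
  have : (((m : ZMod p).val : ℤ) : ZMod p) = (m : ZMod p) := by
    push_cast
    simp [ZMod.natCast_val, ZMod.cast_id]
  rwa [ZMod.intCast_eq_intCast_iff'] at this

lemma psi_add (p : ℕ) [NeZero p] (x y : ZMod p) : psi p (x + y) = psi p x * psi p y := by
  have h : ((((x.val : ℤ) + (y.val : ℤ)) : ℤ) : ZMod p) = x + y := by
    push_cast
    simp [ZMod.natCast_val, ZMod.cast_id]
  rw [← h, psi_intCast, ep_add]
  rfl

lemma psi_zero (p : ℕ) : psi p 0 = 1 := by
  simp [psi, ep]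

lemma sum_psi (p : ℕ) [NeZero p] (hp : 1 < p) : ∑ x : ZMod p, psi p x = 0 := by
  have hζ := Complex.isPrimitiveRoot_exp p (by omega)
  have hgeom := hζ.geom_sum_eq_zero hp
  rw [← hgeom]
  apply Finset.sum_nbij' (fun x : ZMod p => x.val) (fun i : ℕ => (i : ZMod p))
  · intro x _; exact Finset.mem_range.mpr (ZMod.val_lt x)
  · intro i _; exact Finset.mem_univ _
  · intro x _; simp [ZMod.natCast_val, ZMod.cast_id]
  · intro i hi; exact ZMod.val_cast_of_lt (Finset.mem_range.mp hi)
  · intro x _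
    rw [psi, ep, ← Complex.exp_nat_mul]
    congr 1
    push_cast
    ring

lemma sum_psi_mul (p : ℕ) [Fact p.Prime] {c : ZMod p} (hc : c ≠ 0) :
    ∑ x : ZMod p, psi p (c * x) = 0 := by
  rw [← sum_psi p (Fact.out : p.Prime).one_lt]
  exact Fintype.sum_equiv (Equiv.mulLeft₀ c hc) _ _ (fun x => rfl)


lemma Kl_eq (p : ℕ) [Fact p.Prime] (a c : ℤ) :
    Kl p a c = ∑ x ∈ (Finset.univ \ {0} : Finset (ZMod p)),
      psi p ((a : ZMod p) * x + (c : ZMod p) * x⁻¹) := by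
  have hp : p.Prime := Fact.out
  have hp1 : 1 ≤ p := hp.one_lt.le
  rw [Kl]
  apply Finset.sum_nbij' (fun x : ℕ => (x : ZMod p)) (fun z : ZMod p => z.val)
  · intro x hx
    rw [Finset.mem_Icc] at hx
    rw [Finset.mem_sdiff, Finset.mem_singleton]
    refine ⟨Finset.mem_univ _, ?_⟩
    intro h
    have : (↑x : ZMod p).val = x := ZMod.val_cast_of_lt (by omega)
    rw [h] at this
    simp at this
    omega
  · intro z hz
    rw [Finset.mem_sdiff, Finset.mem_singleton] at hz
    rw [Finset.mem_Icc]
    have h1 : z.val ≠ 0 := fun h => hz.2 ((ZMod.val_eq_zero z).mp h)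
    have h2 : z.val < p := ZMod.val_lt z
    omega
  · intro x hx
    rw [Finset.mem_Icc] at hx
    exact ZMod.val_cast_of_lt (by omega)
  · intro z _
    simp [ZMod.natCast_val, ZMod.cast_id]
  · intro x hx
    rw [← psi_intCast p (a * x + c * (((x : ZMod p)⁻¹).val : ℤ))]
    congr 1
    push_cast
    congr 1
    congr 1
    simp [ZMod.natCast_val, ZMod.cast_id]

theorem stmt0 (p : ℕ) [Fact p.Prime] (hp2 : p ≠ 2) (a b : ℤ)
    (ha : ¬ (p : ℤ) ∣ a) (hb : ¬ (p : ℤ) ∣ b) :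
    (Kl p a b) ^ 2 =
      p + ∑ l ∈ Finset.Icc 1 p,
        ((legendreSym p ((l : ℤ) ^ 2 - 4 * l) : ℤ) : ℂ) * Kl p a (l * b) := by
  have hp : p.Prime := Fact.out
  haveI : NeZero p := ⟨hp.pos.ne'⟩
  have hp1 : 1 < p := hp.one_lt
  have h2 : (2 : ZMod p) ≠ 0 := by
    intro h
    have hd : p ∣ 2 := by
      have := (ZMod.natCast_eq_zero_iff 2 p).mp (by exact_mod_cast h)
      exact this
    exact hp2 ((Nat.prime_dvd_prime_iff_eq hp Nat.prime_two).mp hd)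
  set A := ((a : ZMod p)) with hAdef
  set B := ((b : ZMod p)) with hBdef
  have hA : A ≠ 0 := by
    rw [hAdef, Ne, ZMod.intCast_zmod_eq_zero_iff_dvd]; exact ha
  have hB : B ≠ 0 := by
    rw [hBdef, Ne, ZMod.intCast_zmod_eq_zero_iff_dvd]; exact hb
  set U : Finset (ZMod p) := Finset.univ \ {0} with hU
  have memU : ∀ {z : ZMod p}, z ∈ U ↔ z ≠ 0 := by
    intro z; simp [hU]
  set T : ZMod p → ℂ := fun c => ∑ x ∈ U, psi p (A * x + c * x⁻¹) with hT
  have hKl : ∀ c : ℤ, Kl p a c = T ((c : ZMod p)) := fun c => Kl_eq p a c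
  have sumU : ∀ f : ZMod p → ℂ, ∑ x ∈ U, f x = (∑ x : ZMod p, f x) - f 0 := by
    intro f
    rw [hU, Finset.sum_sdiff_eq_sub (by simp)]
    simp
  have cardU : U.card = p - 1 := by
    rw [hU, Finset.card_sdiff_of_subset (by simp)]
    simp [ZMod.card]
  -- T 0 = -1
  have hT0 : T 0 = -1 := by
    rw [hT]
    simp only [zero_mul, add_zero]
    rw [sumU]
    rw [sum_psi_mul p hA]
    simp [psi_zero]
  -- Step 1: square as double sum, reindexed by y = t * x
  have key1 : (T B)^2 = ∑ t ∈ U, ∑ x ∈ U,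
      psi p (A * ((1 + t) * x) + B * ((1 + t⁻¹) * x⁻¹)) := by
    rw [sq, hT, Finset.sum_mul_sum]
    have inner : ∀ x ∈ U, ∑ y ∈ U, psi p (A*x+B*x⁻¹) * psi p (A*y+B*y⁻¹)
        = ∑ t ∈ U, psi p (A * ((1 + t) * x) + B * ((1 + t⁻¹) * x⁻¹)) := by
      intro x hx
      have hx0 : x ≠ 0 := memU.mp hx
      apply Finset.sum_nbij' (fun y : ZMod p => y * x⁻¹) (fun t : ZMod p => t * x)
      · intro y hy; exact memU.mpr (mul_ne_zero (memU.mp hy) (inv_ne_zero hx0))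
      · intro t ht; exact memU.mpr (mul_ne_zero (memU.mp ht) hx0)
      · intro y hy; field_simp
      · intro t ht; field_simp
      · intro y hy
        rw [← psi_add]
        congr 1
        have hy0 : y ≠ 0 := memU.mp hy
        field_simp
        ring
    rw [Finset.sum_congr rfl inner, Finset.sum_comm]
  -- Step 2: for t ≠ -1 the inner sum is a Kloosterman sum
  have key2 : ∀ t ∈ U, t ≠ -1 →
      (∑ x ∈ U, psi p (A * ((1 + t) * x) + B * ((1 + t⁻¹) * x⁻¹)))
        = T ((t + t⁻¹ + 2) * B) := by
    intro t ht htm1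
    have ht0 : t ≠ 0 := memU.mp ht
    have h1t : (1 + t) ≠ 0 := by
      intro h; exact htm1 (by linear_combination h)
    rw [hT]
    apply Finset.sum_nbij' (fun x : ZMod p => (1 + t) * x) (fun z : ZMod p => (1 + t)⁻¹ * z)
    · intro x hx; exact memU.mpr (mul_ne_zero h1t (memU.mp hx))
    · intro z hz; exact memU.mpr (mul_ne_zero (inv_ne_zero h1t) (memU.mp hz))
    · intro x hx; field_simp
    · intro z hz; field_simp
    · intro x hx
      congr 1
      have hx0 : x ≠ 0 := memU.mp hx
      field_simp
      ring
  -- Step 3: the inner sum at t = -1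
  have key3 : (∑ x ∈ U, psi p (A * ((1 + (-1:ZMod p)) * x) + B * ((1 + (-1:ZMod p)⁻¹) * x⁻¹)))
      = (p : ℂ) - 1 := by
    rw [show ((-1 : ZMod p)⁻¹ = -1) from inv_neg_one]
    rw [show (1 + (-1 : ZMod p)) = 0 from by ring]
    simp only [zero_mul, mul_zero, inv_zero, add_zero, psi_zero]
    rw [Finset.sum_const, cardU]
    have : ((p - 1 : ℕ) : ℂ) = (p : ℂ) - 1 := by
      push_cast [Nat.cast_sub hp1.le]
      ring
    simp [this]
  have hm1 : (-1 : ZMod p) ∈ U := memU.mpr (by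
    intro h
    exact one_ne_zero (α := ZMod p) (by linear_combination -h))
  -- Assemble the left side
  have LHS : (T B)^2 = (p : ℂ) + ∑ t ∈ U, T ((t + t⁻¹ + 2) * B) := by
    rw [key1, ← Finset.add_sum_erase U _ hm1]
    rw [Finset.sum_congr rfl (fun t ht => key2 t (Finset.mem_of_mem_erase ht)
      (Finset.ne_of_mem_erase ht))]
    have e0 : ((-1 : ZMod p) + (-1 : ZMod p)⁻¹ + 2) * B = 0 := by
      rw [show ((-1 : ZMod p)⁻¹ = -1) from inv_neg_one]
      ring
    rw [show (∑ t ∈ U, T ((t + t⁻¹ + 2) * B))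
        = T (((-1:ZMod p) + (-1:ZMod p)⁻¹ + 2) * B)
          + ∑ t ∈ U.erase (-1), T ((t + t⁻¹ + 2) * B) from
      (Finset.add_sum_erase U _ hm1).symm]
    rw [e0, hT0, key3]
    ring
  -- Bridge the RHS sum to a sum over ZMod p
  have hRHS : (∑ l ∈ Finset.Icc 1 p,
        ((legendreSym p ((l : ℤ) ^ 2 - 4 * l) : ℤ) : ℂ) * Kl p a (l * b))
      = ∑ l : ZMod p, ((quadraticChar (ZMod p) (l^2 - 4*l) : ℤ) : ℂ) * T (l * B) := by
    apply Finset.sum_nbij' (fun l : ℕ => (l : ZMod p))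
      (fun z : ZMod p => if z = 0 then p else z.val)
    · intro l _; exact Finset.mem_univ _
    · intro z _
      rw [Finset.mem_Icc]
      by_cases h : z = 0
      · simp [h]; omega
      · simp only [h, if_neg, if_false]
        have h1 : z.val ≠ 0 := fun hh => h ((ZMod.val_eq_zero z).mp hh)
        have h2' : z.val < p := ZMod.val_lt z
        omega
    · intro l hl
      rw [Finset.mem_Icc] at hl
      by_cases h : (l : ZMod p) = 0
      · rw [if_pos h]
        have hdvd : p ∣ l := (ZMod.natCast_eq_zero_iff l p).mp h
        have hple : p ≤ l := Nat.le_of_dvd (by omega) hdvd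
        omega
      · rw [if_neg h]
        have hlp : l < p := by
          rcases Nat.lt_or_ge l p with h' | h'
          · exact h'
          · exfalso; apply h
            have : l = p := by omega
            simp [this]
        exact ZMod.val_cast_of_lt hlp
    · intro z _
      by_cases h : z = 0
      · simp [h]
      · rw [if_neg h]
        simp [ZMod.natCast_val, ZMod.cast_id]
    · intro l hl
      congr 1
      · have : legendreSym p ((l : ℤ) ^ 2 - 4 * l)
            = quadraticChar (ZMod p) ((((l : ℤ) ^ 2 - 4 * l : ℤ)) : ZMod p) := rfl
        rw [this]
        congr 2
        push_cast
        ring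
      · rw [hKl (l * b)]
        congr 1
        push_cast
        rw [hBdef]
  -- χ(d) in terms of the number of square roots of d
  have hsplit : ∀ l : ZMod p, ((quadraticChar (ZMod p) (l^2 - 4*l) : ℤ) : ℂ)
      = (((Finset.univ.filter (fun v : ZMod p => v^2 = l^2 - 4*l)).card : ℂ)) - 1 := by
    intro l
    have hchar : ringChar (ZMod p) ≠ 2 := by
      rw [ZMod.ringChar_zmod_n]; exact hp2
    have hcs := quadraticChar_card_sqrts hchar (l^2 - 4*l)
    rw [Set.toFinset_setOf] at hcs
    have : (quadraticChar (ZMod p) (l^2 - 4*l) : ℤ)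
        = ((Finset.univ.filter (fun v : ZMod p => v^2 = l^2 - 4*l)).card : ℤ) - 1 := by
      omega
    rw [this]
    push_cast
    ring
  -- ∑_l T(lB) = 0
  have hzero : ∑ l : ZMod p, T (l * B) = 0 := by
    rw [hT]
    simp only
    rw [Finset.sum_comm]
    apply Finset.sum_eq_zero
    intro x hx
    have hx0 : x ≠ 0 := memU.mp hx
    have harg : ∀ l : ZMod p, A * x + l * B * x⁻¹ = A * x + (B * x⁻¹) * l := by
      intro l; ring
    simp_rw [harg, psi_add]
    rw [← Finset.mul_sum, sum_psi_mul p (mul_ne_zero hB (inv_ne_zero hx0)), mul_zero]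
  -- ∑_l #{v : v² = l²-4l}·T(lB) = ∑_{t∈U} T((t+t⁻¹+2)B) via t ↦ (t+t⁻¹+2, t-t⁻¹)
  have hpairs : ∑ l : ZMod p,
        (((Finset.univ.filter (fun v : ZMod p => v^2 = l^2 - 4*l)).card : ℂ)) * T (l * B)
      = ∑ t ∈ U, T ((t + t⁻¹ + 2) * B) := by
    have hconst : ∀ l : ZMod p,
        (((Finset.univ.filter (fun v : ZMod p => v^2 = l^2 - 4*l)).card : ℂ)) * T (l * B)
        = ∑ v ∈ Finset.univ.filter (fun v : ZMod p => v^2 = l^2 - 4*l), T (l * B) := by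
      intro l
      rw [Finset.sum_const, nsmul_eq_mul]
    simp_rw [hconst]
    rw [← Finset.sum_finset_product
      (Finset.univ.filter (fun q : ZMod p × ZMod p => q.2 ^ 2 = q.1 ^ 2 - 4 * q.1))
      Finset.univ (fun l => Finset.univ.filter (fun v : ZMod p => v ^ 2 = l ^ 2 - 4 * l))
      (f := fun q : ZMod p × ZMod p => T (q.1 * B)) (by intro q; simp)]
    symm
    apply Finset.sum_nbij' (fun t : ZMod p => ((t + t⁻¹ + 2, t - t⁻¹) : ZMod p × ZMod p))
      (fun q : ZMod p × ZMod p => (q.1 - 2 + q.2) / 2)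
    · intro t ht
      have ht0 : t ≠ 0 := memU.mp ht
      rw [Finset.mem_filter]
      refine ⟨Finset.mem_univ _, ?_⟩
      field_simp
      ring
    · intro q hq
      rw [Finset.mem_filter] at hq
      have hv := hq.2
      apply memU.mpr
      intro h0
      have h0' : q.1 - 2 + q.2 = 0 := by
        field_simp at h0
        simpa using h0
      have hv2 : q.2 = 2 - q.1 := by linear_combination h0'
      rw [hv2] at hv
      have h4 : (4 : ZMod p) = 0 := by linear_combination hv
      exact (mul_ne_zero h2 h2) (by linear_combination h4)
    · intro t ht
      have ht0 : t ≠ 0 := memU.mp ht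
      field_simp
      ring
    · intro q hq
      rw [Finset.mem_filter] at hq
      have hv := hq.2
      have hmul : ((q.1 - 2 + q.2) / 2) * ((q.1 - 2 - q.2) / 2) = 1 := by
        field_simp
        linear_combination -hv
      have hinv : ((q.1 - 2 + q.2) / 2)⁻¹ = (q.1 - 2 - q.2) / 2 :=
        inv_eq_of_mul_eq_one_right hmul
      have hne : (q.1 - 2 + q.2) / 2 ≠ 0 := by
        intro h
        rw [h, zero_mul] at hmul
        exact zero_ne_one hmul
      ext
      · show (q.1 - 2 + q.2) / 2 + ((q.1 - 2 + q.2) / 2)⁻¹ + 2 = q.1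
        rw [hinv]
        field_simp
        ring
      · show (q.1 - 2 + q.2) / 2 - ((q.1 - 2 + q.2) / 2)⁻¹ = q.2
        rw [hinv]
        field_simp
        ring
    · intro t ht
      rfl
  -- Put everything together
  rw [hKl b, hRHS]
  rw [show T ((b : ZMod p)) = T B from rfl, LHS]
  simp_rw [hsplit, sub_one_mul]
  rw [Finset.sum_sub_distrib, hpairs, hzero, sub_zero]
end

section
/- For an odd prime p and an integer l with p ∤ l, the number of integers z with 1 ≤ z ≤ p-2 satisfying (z+1)̄ - z̄ ≡ l (mod p) equals 1 + ((l^2 - 4l)/p), where (·/p) is the Legendre symbol. -/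
open Finset

theorem stmt2 (p : ℕ) [Fact p.Prime] (hp2 : p ≠ 2) (l : ℤ) (hl : ¬ (p : ℤ) ∣ l) :
    (((Finset.Icc 1 (p - 2)).filter
        (fun z : ℕ => (((z + 1 : ℕ) : ZMod p))⁻¹ - ((z : ZMod p))⁻¹ = (l : ZMod p))).card : ℤ)
      = 1 + legendreSym p (l ^ 2 - 4 * l) := by
  have hp := Fact.out (p := p.Prime)
  have hp3 : 3 ≤ p := by
    rcases hp.two_le.lt_or_eq with h | h
    · omega
    · exact absurd h.symm hp2
  set L : ZMod p := (l : ZMod p) with hL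
  have hl0 : L ≠ 0 := fun h => hl ((ZMod.intCast_zmod_eq_zero_iff_dvd l p).mp h)
  have h2 : (2 : ZMod p) ≠ 0 := by
    have : ((2 : ℕ) : ZMod p) ≠ 0 := by
      rw [Ne, ZMod.natCast_eq_zero_iff]
      intro h
      exact hp2 ((Nat.prime_dvd_prime_iff_eq hp Nat.prime_two).mp h)
      -- p ∣ 2 means p = 2
    simpa using this
  have key : ((Finset.Icc 1 (p - 2)).filter
        (fun z : ℕ => (((z + 1 : ℕ) : ZMod p))⁻¹ - ((z : ZMod p))⁻¹ = (l : ZMod p))).card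
      = {x : ZMod p | x ^ 2 = ((l ^ 2 - 4 * l : ℤ) : ZMod p)}.toFinset.card := by
    refine Finset.card_nbij (fun z => 2 * L * (z : ZMod p) + L) ?_ ?_ ?_
    · intro z hz
      simp only [coe_filter, Set.mem_setOf_eq, mem_filter, mem_Icc] at hz
      obtain ⟨⟨hz1, hz2⟩, hcond⟩ := hz
      have hx0 : (z : ZMod p) ≠ 0 := by
        rw [Ne, ZMod.natCast_eq_zero_iff]
        intro h
        have := Nat.le_of_dvd (by omega) h
        omega
      have hx1 : (z : ZMod p) + 1 ≠ 0 := by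
        have : ((z + 1 : ℕ) : ZMod p) ≠ 0 := by
          rw [Ne, ZMod.natCast_eq_zero_iff]
          intro h
          have := Nat.le_of_dvd (by omega) h
          omega
        push_cast at this
        exact this
      push_cast at hcond
      set x : ZMod p := (z : ZMod p)
      have hq : L * x ^ 2 + L * x + 1 = 0 := by
        field_simp at hcond
        linear_combination -hcond
      simp only [Finset.mem_coe, Set.coe_toFinset, Set.mem_toFinset, Set.mem_setOf_eq]
      push_cast
      linear_combination (4 * L) * hq
    · intro z1 hz1 z2 hz2 heq
      simp only [coe_filter, Set.mem_setOf_eq, mem_Icc] at hz1 hz2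
      have h12 : (z1 : ZMod p) = (z2 : ZMod p) := by
        field_simp at heq
        exact mul_left_cancel₀ h2 (add_right_cancel heq)
      have := congrArg ZMod.val h12
      rwa [ZMod.val_natCast_of_lt (by omega), ZMod.val_natCast_of_lt (by omega)] at this
    · intro y hy
      simp only [Set.coe_toFinset, Set.mem_setOf_eq] at hy
      push_cast at hy
      set x : ZMod p := (y - L) / (2 * L) with hxdef
      have h2L : (2 * L : ZMod p) ≠ 0 := mul_ne_zero h2 hl0
      have hq : L * x ^ 2 + L * x + 1 = 0 := by
        rw [hxdef]
        field_simp
        linear_combination hy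
      have hx0 : x ≠ 0 := by
        intro h
        rw [h] at hq
        simp at hq
      have hx1 : x + 1 ≠ 0 := by
        intro h
        have h1 : (1 : ZMod p) = 0 := by linear_combination hq - L * x * h
        exact one_ne_zero h1
      have hvx : ((x.val : ℕ) : ZMod p) = x := by
        simp [ZMod.natCast_val, ZMod.cast_id]
      have hvlt : x.val < p := ZMod.val_lt x
      have hv0 : x.val ≠ 0 := fun h => hx0 (by rw [← hvx, h]; simp)
      have hvne : x.val ≠ p - 1 := by
        intro h
        apply hx1
        have : x = ((p - 1 : ℕ) : ZMod p) := by rw [← h, hvx]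
        rw [this, Nat.cast_sub hp.one_le]
        simp
      refine (Set.mem_image _ _ _).mpr ⟨x.val, ?_, ?_⟩
      · simp only [coe_filter, Set.mem_setOf_eq, mem_Icc]
        refine ⟨⟨by omega, by omega⟩, ?_⟩
        push_cast
        rw [hvx]
        field_simp
        linear_combination -hq
      · rw [hvx, hxdef]
        field_simp
        ring
  rw [key]
  have := legendreSym.card_sqrts (p := p) hp2 (l ^ 2 - 4 * l)
  omega
end

section
/- For an odd prime p and integers a, b with p ∤ ab, |K(a,b)| ≤ √(p + p^{3/2}), where K(a,b) = ∑_{x=1}^{p-1} e_p(a x + b x̄). -/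
open Finset

namespace Kloo

open Complex

variable {p : ℕ} [hp : Fact p.Prime]

local notation "ψ" => (ZMod.stdAddChar (N := p))
local notation "U" => (ZMod p)ˣ

lemma ep_eq (α : ℤ) : ep p α = ψ ((α : ZMod p)) := (ZMod.stdAddChar_coe α).symm

lemma ortho (c : ZMod p) : ∑ z : ZMod p, ψ (z * c) = if c = 0 then (p : ℂ) else 0 := by
  rw [AddChar.sum_mulShift c (ZMod.isPrimitive_stdAddChar p)]
  simp [ZMod.card p]

lemma ortho' (c : ZMod p) : ∑ z : ZMod p, ψ (c * z) = if c = 0 then (p : ℂ) else 0 := by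
  simp_rw [mul_comm c]; exact ortho c

lemma psi_ne_zero (z : ZMod p) : ψ z ≠ 0 := by
  intro h
  have h1 : ψ z * ψ (-z) = 1 := by
    rw [← AddChar.map_add_eq_mul]; simp
  rw [h, zero_mul] at h1; exact zero_ne_one h1

lemma conj_psi (z : ZMod p) : (starRingEnd ℂ) (ψ z) = ψ (-z) := by
  have habs : ‖ψ z‖ = 1 := by
    rw [ZMod.stdAddChar_apply]; exact Circle.norm_coe _
  have h1 : ψ z * ψ (-z) = 1 := by
    rw [← AddChar.map_add_eq_mul]; simp
  have h2 : ψ z * (starRingEnd ℂ) (ψ z) = 1 := by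
    rw [Complex.mul_conj]
    norm_cast
    rw [Complex.normSq_eq_norm_sq, habs]; norm_num
  exact mul_left_cancel₀ (psi_ne_zero z) (h2.trans h1.symm)

/-- sum over units as sum over nonzero elements -/
lemma sum_units (g : ZMod p → ℂ) :
    ∑ u : U, g ↑u = ∑ z ∈ univ.erase (0 : ZMod p), g z := by
  classical
  refine Finset.sum_nbij' (fun u => (u : ZMod p))
    (fun z => if hz : z = (0 : ZMod p) then 1 else Units.mk0 z hz) ?_ ?_ ?_ ?_ ?_
  · intro u _
    exact Finset.mem_erase.2 ⟨u.ne_zero, Finset.mem_univ _⟩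
  · intro z _; exact Finset.mem_univ _
  · intro u _
    simp [Units.ne_zero u]
  · intro z hz
    rw [Finset.mem_erase] at hz
    simp [hz.1]
  · intro u _; rfl

lemma sum_Icc (g : ZMod p → ℂ) :
    ∑ x ∈ Finset.Icc 1 (p - 1), g ((x : ℕ) : ZMod p) = ∑ z ∈ univ.erase (0 : ZMod p), g z := by
  have hp1 : 1 < p := hp.out.one_lt
  refine Finset.sum_nbij' (fun x => ((x : ℕ) : ZMod p)) (fun z => z.val) ?_ ?_ ?_ ?_ ?_
  · intro x hx
    rw [Finset.mem_Icc] at hx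
    refine Finset.mem_erase.2 ⟨?_, Finset.mem_univ _⟩
    have hxlt : x < p := lt_of_le_of_lt hx.2 (by omega)
    have hv : ((x : ℕ) : ZMod p).val = x := ZMod.val_natCast_of_lt hxlt
    intro h0
    have h0' : ((x : ℕ) : ZMod p) = 0 := h0
    rw [h0', ZMod.val_zero] at hv
    omega
  · intro z hz
    rw [Finset.mem_erase] at hz
    have h1 : z.val ≠ 0 := fun h => hz.1 ((ZMod.val_eq_zero z).1 h)
    have h2 : z.val < p := ZMod.val_lt z
    show z.val ∈ Finset.Icc 1 (p - 1)
    rw [Finset.mem_Icc]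
    omega
  · intro x hx
    rw [Finset.mem_Icc] at hx
    exact ZMod.val_natCast_of_lt (lt_of_le_of_lt hx.2 (by omega))
  · intro z _
    exact ZMod.natCast_zmod_val z
  · intro x _; rfl

/-- The Kloosterman sum over `ZMod p`. -/
noncomputable def K (c d : ZMod p) : ℂ := ∑ u : U, ψ (c * ↑u + d * (↑u : ZMod p)⁻¹)

lemma Kl_eq (a b : ℤ) : Kl p a b = K (a : ZMod p) (b : ZMod p) := by
  have hcast : ∀ x : ℕ, (((a * x + b * ((((x : ℕ) : ZMod p)⁻¹).val : ℤ) : ℤ)) : ZMod p)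
      = (a : ZMod p) * ((x : ℕ) : ZMod p) + (b : ZMod p) * (((x : ℕ) : ZMod p))⁻¹ := by
    intro x
    push_cast
    congr 1
    congr 1
    push_cast [ZMod.natCast_val]
    simp
  calc Kl p a b = ∑ x ∈ Finset.Icc 1 (p - 1),
      ψ ((a : ZMod p) * ((x : ℕ) : ZMod p) + (b : ZMod p) * (((x : ℕ) : ZMod p))⁻¹) := by
        unfold Kl
        refine Finset.sum_congr rfl fun x _ => ?_
        rw [ep_eq, hcast x]
    _ = ∑ z ∈ univ.erase (0 : ZMod p), ψ ((a : ZMod p) * z + (b : ZMod p) * z⁻¹) :=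
        sum_Icc (p := p) (fun z => ψ ((a : ZMod p) * z + (b : ZMod p) * z⁻¹))
    _ = K (a : ZMod p) (b : ZMod p) := (sum_units (p := p) (fun z => ψ ((a : ZMod p) * z + (b : ZMod p) * z⁻¹))).symm


lemma K_shift (c d : ZMod p) (t : U) :
    K (c * (↑t : ZMod p)) (d * (↑t : ZMod p)⁻¹) = K c d := by
  unfold K
  refine Fintype.sum_equiv (Equiv.mulLeft t) _ _ fun y => ?_
  show ψ ((c * (↑t : ZMod p)) * (↑y : ZMod p) + (d * (↑t : ZMod p)⁻¹) * (↑y : ZMod p)⁻¹)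
      = ψ (c * (↑(t * y) : ZMod p) + d * (↑(t * y) : ZMod p)⁻¹)
  congr 1
  have ht : (↑t : ZMod p) ≠ 0 := t.ne_zero
  have hy : (↑y : ZMod p) ≠ 0 := y.ne_zero
  simp only [Units.val_mul, Units.val_inv_eq_inv_val]
  field_simp

lemma K_eq_f (c : ZMod p) (u : U) : K c ↑u = K (c * (↑u : ZMod p)) 1 := by
  have h := K_shift (c := c * (↑u : ZMod p)) (d := 1) u⁻¹
  have h2 : ((↑(u⁻¹) : ZMod p))⁻¹ = (↑u : ZMod p) := by
    rw [Units.val_inv_eq_inv_val, inv_inv]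
  rw [Units.val_inv_eq_inv_val, one_mul, mul_assoc, inv_inv,
    mul_inv_cancel₀ u.ne_zero, mul_one] at h
  rw [← h]


lemma sum_psi_units (c : ZMod p) :
    ∑ u : U, ψ (c * ↑u) = (if c = 0 then (p : ℂ) else 0) - 1 := by
  rw [sum_units (p := p) (fun z => ψ (c * z)),
    Finset.sum_erase_eq_sub (Finset.mem_univ (0 : ZMod p)), ortho' c]
  simp

lemma K_right_zero (c : ZMod p) : K c 0 = (if c = 0 then (p : ℂ) else 0) - 1 := by
  unfold K
  simp only [zero_mul, add_zero]
  exact sum_psi_units c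

lemma f_zero : K (0 : ZMod p) 1 = -1 := by
  unfold K
  simp only [zero_mul, one_mul, zero_add]
  have h : ∑ u : U, ψ ((↑u : ZMod p)⁻¹) = ∑ u : U, ψ (1 * ↑u) := by
    refine Fintype.sum_equiv (Equiv.inv U) _ _ fun x => ?_
    show ψ ((↑x : ZMod p)⁻¹) = ψ (1 * (↑(x⁻¹) : ZMod p))
    rw [Units.val_inv_eq_inv_val, one_mul]
  rw [h, sum_psi_units 1]
  simp

lemma conj_K (c d : ZMod p) :
    (starRingEnd ℂ) (K c d) = ∑ u : U, ψ (-(c * ↑u + d * (↑u : ZMod p)⁻¹)) := by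
  unfold K
  rw [map_sum]
  exact Finset.sum_congr rfl fun u _ => conj_psi _

lemma Ksq (c d : ZMod p) : K c d * (starRingEnd ℂ) (K c d) =
    ∑ x : U, ∑ y : U, ψ (c * ((↑x : ZMod p) - ↑y) + d * ((↑x : ZMod p)⁻¹ - (↑y : ZMod p)⁻¹)) := by
  rw [conj_K]
  unfold K
  rw [Finset.sum_mul_sum]
  refine Finset.sum_congr rfl fun x _ => Finset.sum_congr rfl fun y _ => ?_
  rw [← AddChar.map_add_eq_mul]
  congr 1
  ring

lemma M2 : ∑ n : ZMod p, K n 1 * (starRingEnd ℂ) (K n 1) = ((p : ℂ) - 1) * p := by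
  have step1 : ∀ n : ZMod p, K n 1 * (starRingEnd ℂ) (K n 1) =
      ∑ x : U, ∑ y : U, ψ (n * ((↑x : ZMod p) - ↑y)) *
        ψ (1 * ((↑x : ZMod p)⁻¹ - (↑y : ZMod p)⁻¹)) := by
    intro n
    rw [Ksq]
    exact Finset.sum_congr rfl fun x _ => Finset.sum_congr rfl fun y _ =>
      (AddChar.map_add_eq_mul ψ _ _)
  calc ∑ n : ZMod p, K n 1 * (starRingEnd ℂ) (K n 1)
      = ∑ x : U, ∑ y : U, (∑ n : ZMod p, ψ (n * ((↑x : ZMod p) - ↑y))) *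
          ψ (1 * ((↑x : ZMod p)⁻¹ - (↑y : ZMod p)⁻¹)) := by
        simp_rw [step1, Finset.sum_mul]
        rw [Finset.sum_comm]
        exact Finset.sum_congr rfl fun x _ => Finset.sum_comm
    _ = ∑ x : U, (p : ℂ) := by
        refine Finset.sum_congr rfl fun x _ => ?_
        rw [Finset.sum_eq_single x]
        · rw [sub_self, sub_self, ortho, if_pos rfl, mul_zero, AddChar.map_zero_eq_one, mul_one]
        · intro y _ hyx
          rw [ortho, if_neg, zero_mul]
          intro h
          exact hyx (Units.ext (by rwa [sub_eq_zero] at h)).symm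
        · intro h; exact absurd (Finset.mem_univ x) h
    _ = ((p : ℂ) - 1) * p := by
        rw [Finset.sum_const, Finset.card_univ, ZMod.card_units p]
        have h3 : (1 : ℕ) ≤ p := hp.out.one_lt.le
        rw [nsmul_eq_mul, Nat.cast_sub h3]
        push_cast
        ring


/-- solutions (y1,y2) to y1+y2 = x1+x2, 1/y1+1/y2 = 1/x1+1/x2 -/
def sol (x1 x2 : U) : Finset (U × U) :=
  univ.filter (fun yz => ((x1 : ZMod p) + (x2 : ZMod p) = (yz.1 : ZMod p) + (yz.2 : ZMod p)) ∧
    ((x1 : ZMod p)⁻¹ + (x2 : ZMod p)⁻¹ = (yz.1 : ZMod p)⁻¹ + (yz.2 : ZMod p)⁻¹))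

lemma key {x1 x2 y1 y2 : U} (hs : (x1 : ZMod p) + (x2 : ZMod p) ≠ 0)
    (h1 : (x1 : ZMod p) + (x2 : ZMod p) = (y1 : ZMod p) + (y2 : ZMod p))
    (h2 : (x1 : ZMod p)⁻¹ + (x2 : ZMod p)⁻¹ = (y1 : ZMod p)⁻¹ + (y2 : ZMod p)⁻¹) :
    (y1 = x1 ∧ y2 = x2) ∨ (y1 = x2 ∧ y2 = x1) := by
  have ha : (x1 : ZMod p) ≠ 0 := x1.ne_zero
  have hb : (x2 : ZMod p) ≠ 0 := x2.ne_zero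
  have hc : (y1 : ZMod p) ≠ 0 := y1.ne_zero
  have hd : (y2 : ZMod p) ≠ 0 := y2.ne_zero
  have division : ∀ (u v : ZMod p), u ≠ 0 → v ≠ 0 → u⁻¹ + v⁻¹ = (u + v) / (u * v) := by
    intro u v hu hv
    field_simp
    ring
  have e1 : ((x1 : ZMod p) + x2) * ((y1 : ZMod p) * y2)
      = ((y1 : ZMod p) + y2) * ((x1 : ZMod p) * x2) := by
    rw [division _ _ ha hb, division _ _ hc hd,
      div_eq_div_iff (mul_ne_zero ha hb) (mul_ne_zero hc hd)] at h2
    exact h2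
  have hprod : (y1 : ZMod p) * y2 - (x1 : ZMod p) * x2 = 0 := by
    have h3 : ((x1 : ZMod p) + x2) * ((y1 : ZMod p) * y2 - (x1 : ZMod p) * x2) = 0 := by
      linear_combination e1 - ((x1 : ZMod p) * x2) * h1
    rcases mul_eq_zero.1 h3 with h | h
    · exact absurd h hs
    · exact h
  have hquad : ((y1 : ZMod p) - x1) * ((y1 : ZMod p) - x2) = 0 := by
    linear_combination (-(y1 : ZMod p)) * h1 - hprod
  rcases mul_eq_zero.1 hquad with h | h
  · left
    have hy1 : (y1 : ZMod p) = x1 := sub_eq_zero.1 h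
    have hy2 : (y2 : ZMod p) = x2 := by linear_combination -h1 - hy1
    exact ⟨Units.ext hy1, Units.ext hy2⟩
  · right
    have hy1 : (y1 : ZMod p) = x2 := sub_eq_zero.1 h
    have hy2 : (y2 : ZMod p) = x1 := by linear_combination -h1 - hy1
    exact ⟨Units.ext hy1, Units.ext hy2⟩

lemma two_ne_zero' (hp2 : p ≠ 2) : (2 : ZMod p) ≠ 0 := by
  have : ((2 : ℕ) : ZMod p) ≠ 0 := by
    rw [Ne, ZMod.natCast_eq_zero_iff]
    intro hdvd
    have hle := Nat.le_of_dvd (by norm_num) hdvd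
    have h2 := hp.out.two_le
    omega
  simpa using this

lemma neg_ne_self (hp2 : p ≠ 2) (x : U) : -x ≠ x := by
  intro h
  have : (-(x : ZMod p)) = (x : ZMod p) := by
    rw [← Units.val_neg, h]
  have h2 : (2 : ZMod p) * (x : ZMod p) = 0 := by linear_combination -this
  rcases mul_eq_zero.1 h2 with h' | h'
  · exact two_ne_zero' hp2 h'
  · exact x.ne_zero h'

lemma card_sol (hp2 : p ≠ 2) (x1 x2 : U) : (sol x1 x2).card =
    if (x1 : ZMod p) + (x2 : ZMod p) = 0 then p - 1 else if x1 = x2 then 1 else 2 := by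
  by_cases hs : (x1 : ZMod p) + (x2 : ZMod p) = 0
  · rw [if_pos hs]
    have himg : sol x1 x2 = univ.image (fun y : U => (y, -y)) := by
      ext ⟨y1, y2⟩
      simp only [sol, Finset.mem_filter, Finset.mem_univ, true_and, Finset.mem_image]
      constructor
      · rintro ⟨h1, _⟩
        refine ⟨y1, ?_⟩
        have hv : (y2 : ZMod p) = -(y1 : ZMod p) := by linear_combination hs - h1
        have hu : y2 = -y1 := Units.ext (by rw [Units.val_neg]; exact hv)
        rw [hu]
      · rintro ⟨y, hy⟩
        injection hy with hA hB
        subst hA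
        subst hB
        constructor
        · rw [Units.val_neg]; linear_combination hs
        · rw [Units.val_neg, inv_neg]
          have hx2 : (x2 : ZMod p) = -(x1 : ZMod p) := by linear_combination hs
          rw [hx2, inv_neg]
          ring
    rw [himg, Finset.card_image_of_injective _ (fun a b h => congrArg Prod.fst h),
      Finset.card_univ, ZMod.card_units p]
  · rw [if_neg hs]
    have hset : sol x1 x2 = insert (x1, x2) {(x2, x1)} := by
      ext ⟨y1, y2⟩
      simp only [sol, Finset.mem_filter, Finset.mem_univ, true_and, Finset.mem_insert,
        Finset.mem_singleton, Prod.mk.injEq]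
      constructor
      · rintro ⟨h1, h2⟩
        rcases key hs h1 h2 with ⟨ha, hb⟩ | ⟨ha, hb⟩
        · exact Or.inl ⟨ha, hb⟩
        · exact Or.inr ⟨ha, hb⟩
      · rintro (⟨rfl, rfl⟩ | ⟨rfl, rfl⟩)
        · exact ⟨rfl, rfl⟩
        · exact ⟨add_comm _ _, add_comm _ _⟩
    rw [hset]
    by_cases hx : x1 = x2
    · subst hx
      rw [if_pos rfl]
      simp
    · rw [if_neg hx]
      rw [Finset.card_insert_of_notMem, Finset.card_singleton]
      rw [Finset.mem_singleton]
      intro h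
      exact hx (congrArg Prod.fst h)

lemma sum_card_sol (hp2 : p ≠ 2) :
    ∑ x1 : U, ∑ x2 : U, (sol x1 x2).card = (p - 1) * (3 * p - 6) := by
  have hp3 : 3 ≤ p := by
    have := hp.out.two_le
    rcases Nat.lt_or_ge p 3 with h | h
    · interval_cases p
      · exact absurd rfl hp2
    · exact h
  have inner : ∀ x1 : U, ∑ x2 : U, (sol x1 x2).card = 3 * p - 6 := by
    intro x1
    have hrw : ∀ x2 : U, (sol x1 x2).card =
        if (x1 : ZMod p) + (x2 : ZMod p) = 0 then p - 1 else if x1 = x2 then 1 else 2 :=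
      card_sol hp2 x1
    calc ∑ x2 : U, (sol x1 x2).card
        = ∑ x2 : U, (if (x1 : ZMod p) + (x2 : ZMod p) = 0 then p - 1
            else if x1 = x2 then 1 else 2) := Finset.sum_congr rfl fun x2 _ => hrw x2
      _ = 3 * p - 6 := by
          have hmem : -x1 ∈ (univ : Finset U) := Finset.mem_univ _
          rw [← Finset.add_sum_erase _ _ hmem]
          have hx1mem : x1 ∈ (univ : Finset U).erase (-x1) :=
            Finset.mem_erase.2 ⟨fun h => neg_ne_self hp2 x1 h.symm, Finset.mem_univ _⟩
          rw [← Finset.add_sum_erase _ _ hx1mem]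
          have t1 : (if (x1 : ZMod p) + ((-x1 : U) : ZMod p) = 0 then p - 1
              else if x1 = -x1 then 1 else 2) = p - 1 := by
            rw [if_pos]
            rw [Units.val_neg]
            ring
          have t2 : (if (x1 : ZMod p) + ((x1 : U) : ZMod p) = 0 then p - 1
              else if x1 = x1 then 1 else 2) = 1 := by
            rw [if_neg, if_pos rfl]
            intro h
            have h2 : (2 : ZMod p) * (x1 : ZMod p) = 0 := by linear_combination h
            rcases mul_eq_zero.1 h2 with h' | h'
            · exact two_ne_zero' hp2 h'
            · exact x1.ne_zero h'
          rw [t1, t2]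
          have t3 : ∑ x2 ∈ ((univ : Finset U).erase (-x1)).erase x1,
              (if (x1 : ZMod p) + (x2 : ZMod p) = 0 then p - 1
                else if x1 = x2 then 1 else 2) = 2 * (p - 3) := by
            have hconst : ∀ x2 ∈ ((univ : Finset U).erase (-x1)).erase x1,
                (if (x1 : ZMod p) + (x2 : ZMod p) = 0 then p - 1
                  else if x1 = x2 then 1 else 2) = 2 := by
              intro x2 hx2
              rw [Finset.mem_erase, Finset.mem_erase] at hx2
              rw [if_neg, if_neg]
              · exact fun h => hx2.1 h.symm
              · intro h
                apply hx2.2.1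
                apply Units.ext
                rw [Units.val_neg]
                linear_combination h
            rw [Finset.sum_congr rfl hconst, Finset.sum_const,
              Finset.card_erase_of_mem hx1mem, Finset.card_erase_of_mem hmem,
              Finset.card_univ, ZMod.card_units p, smul_eq_mul]
            omega
          rw [t3]
          omega
  rw [Finset.sum_congr rfl fun x1 _ => inner x1, Finset.sum_const, Finset.card_univ,
    ZMod.card_units p, smul_eq_mul]


lemma swap4 {α β γ δ : Type} [Fintype α] [Fintype β] [Fintype γ] [Fintype δ]
    (F : α → β → γ → δ → ℂ) :
    ∑ a : α, ∑ b : β, ∑ c : γ, ∑ d : δ, F a b c d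
      = ∑ c : γ, ∑ d : δ, ∑ a : α, ∑ b : β, F a b c d := by
  calc ∑ a : α, ∑ b : β, ∑ c : γ, ∑ d : δ, F a b c d
      = ∑ a : α, ∑ c : γ, ∑ b : β, ∑ d : δ, F a b c d :=
        Finset.sum_congr rfl fun a _ => Finset.sum_comm
    _ = ∑ c : γ, ∑ a : α, ∑ b : β, ∑ d : δ, F a b c d := Finset.sum_comm
    _ = ∑ c : γ, ∑ a : α, ∑ d : δ, ∑ b : β, F a b c d :=
        Finset.sum_congr rfl fun c _ => Finset.sum_congr rfl fun a _ => Finset.sum_comm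
    _ = ∑ c : γ, ∑ d : δ, ∑ a : α, ∑ b : β, F a b c d :=
        Finset.sum_congr rfl fun c _ => Finset.sum_comm

lemma Ksq' (c d : ZMod p) : K c d * (starRingEnd ℂ) (K c d) =
    ∑ q : U × U, ψ (c * ((q.1 : ZMod p) - (q.2 : ZMod p))
      + d * ((q.1 : ZMod p)⁻¹ - (q.2 : ZMod p)⁻¹)) := by
  rw [Ksq]
  exact (Fintype.sum_prod_type (fun q : U × U => ψ (c * ((q.1 : ZMod p) - (q.2 : ZMod p))
    + d * ((q.1 : ZMod p)⁻¹ - (q.2 : ZMod p)⁻¹)))).symm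

lemma K4 (c d : ZMod p) :
    (K c d * (starRingEnd ℂ) (K c d)) * (K c d * (starRingEnd ℂ) (K c d)) =
    ∑ q : U × U, ∑ r : U × U,
      ψ (c * (((q.1 : ZMod p) - (q.2 : ZMod p)) + ((r.1 : ZMod p) - (r.2 : ZMod p)))) *
      ψ (d * (((q.1 : ZMod p)⁻¹ - (q.2 : ZMod p)⁻¹)
        + ((r.1 : ZMod p)⁻¹ - (r.2 : ZMod p)⁻¹))) := by
  rw [Ksq', Finset.sum_mul_sum]
  refine Finset.sum_congr rfl fun q _ => Finset.sum_congr rfl fun r _ => ?_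
  rw [← AddChar.map_add_eq_mul, ← AddChar.map_add_eq_mul]
  congr 1
  ring

lemma inner_cd (E W : ZMod p) : ∑ c : ZMod p, ∑ d : ZMod p, ψ (c * E) * ψ (d * W)
    = (if E = 0 then (p : ℂ) else 0) * (if W = 0 then (p : ℂ) else 0) := by
  rw [← Finset.sum_mul_sum, ortho E, ortho W]

lemma inner_y (x1 x2 : U) :
    ∑ t : U × U,
      (if ((x1 : ZMod p) - (t.1 : ZMod p)) + ((x2 : ZMod p) - (t.2 : ZMod p)) = 0
        then (p : ℂ) else 0) *
      (if ((x1 : ZMod p)⁻¹ - (t.1 : ZMod p)⁻¹) + ((x2 : ZMod p)⁻¹ - (t.2 : ZMod p)⁻¹) = 0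
        then (p : ℂ) else 0)
    = (p : ℂ)^2 * ((sol x1 x2).card : ℂ) := by
  have point : ∀ t : U × U,
      (if ((x1 : ZMod p) - (t.1 : ZMod p)) + ((x2 : ZMod p) - (t.2 : ZMod p)) = 0
        then (p : ℂ) else 0) *
      (if ((x1 : ZMod p)⁻¹ - (t.1 : ZMod p)⁻¹) + ((x2 : ZMod p)⁻¹ - (t.2 : ZMod p)⁻¹) = 0
        then (p : ℂ) else 0)
      = if t ∈ sol x1 x2 then (p : ℂ)^2 else 0 := by
    rintro ⟨y1, y2⟩
    have c1 : (((x1 : ZMod p) - (y1 : ZMod p)) + ((x2 : ZMod p) - (y2 : ZMod p)) = 0)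
        ↔ ((x1 : ZMod p) + (x2 : ZMod p) = (y1 : ZMod p) + (y2 : ZMod p)) :=
      ⟨fun h => by linear_combination h, fun h => by linear_combination h⟩
    have c2 : (((x1 : ZMod p)⁻¹ - (y1 : ZMod p)⁻¹) + ((x2 : ZMod p)⁻¹ - (y2 : ZMod p)⁻¹) = 0)
        ↔ ((x1 : ZMod p)⁻¹ + (x2 : ZMod p)⁻¹ = (y1 : ZMod p)⁻¹ + (y2 : ZMod p)⁻¹) :=
      ⟨fun h => by linear_combination h, fun h => by linear_combination h⟩
    have hmem : ((y1, y2) ∈ sol x1 x2) ↔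
        (((x1 : ZMod p) + (x2 : ZMod p) = (y1 : ZMod p) + (y2 : ZMod p)) ∧
          ((x1 : ZMod p)⁻¹ + (x2 : ZMod p)⁻¹ = (y1 : ZMod p)⁻¹ + (y2 : ZMod p)⁻¹)) := by
      unfold sol
      rw [Finset.mem_filter]
      exact ⟨fun h => h.2, fun h => ⟨Finset.mem_univ _, h⟩⟩
    by_cases hA : ((x1 : ZMod p) + (x2 : ZMod p) = (y1 : ZMod p) + (y2 : ZMod p)) <;>
      by_cases hB : ((x1 : ZMod p)⁻¹ + (x2 : ZMod p)⁻¹ = (y1 : ZMod p)⁻¹ + (y2 : ZMod p)⁻¹)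
    · rw [if_pos (c1.2 hA), if_pos (c2.2 hB), if_pos (hmem.2 ⟨hA, hB⟩)]; ring
    · rw [if_neg (fun h => hB (c2.1 h)), mul_zero, if_neg (fun hm => hB (hmem.1 hm).2)]
    · rw [if_neg (fun h => hA (c1.1 h)), zero_mul, if_neg (fun hm => hA (hmem.1 hm).1)]
    · rw [if_neg (fun h => hA (c1.1 h)), zero_mul, if_neg (fun hm => hA (hmem.1 hm).1)]
  calc ∑ t : U × U,
      (if ((x1 : ZMod p) - (t.1 : ZMod p)) + ((x2 : ZMod p) - (t.2 : ZMod p)) = 0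
        then (p : ℂ) else 0) *
      (if ((x1 : ZMod p)⁻¹ - (t.1 : ZMod p)⁻¹) + ((x2 : ZMod p)⁻¹ - (t.2 : ZMod p)⁻¹) = 0
        then (p : ℂ) else 0)
      = ∑ t : U × U, (if t ∈ sol x1 x2 then (p : ℂ)^2 else 0) :=
        Finset.sum_congr rfl fun t _ => point t
    _ = ∑ t ∈ univ ∩ sol x1 x2, (p : ℂ)^2 := Finset.sum_ite_mem _ _ _
    _ = (p : ℂ)^2 * ((sol x1 x2).card : ℂ) := by
        rw [Finset.univ_inter, Finset.sum_const, nsmul_eq_mul, mul_comm]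

lemma M4 (hp2 : p ≠ 2) : ∑ c : ZMod p, ∑ d : ZMod p,
    (K c d * (starRingEnd ℂ) (K c d)) * (K c d * (starRingEnd ℂ) (K c d))
    = (p : ℂ)^2 * (((p - 1) * (3 * p - 6) : ℕ) : ℂ) := by
  calc ∑ c : ZMod p, ∑ d : ZMod p,
      (K c d * (starRingEnd ℂ) (K c d)) * (K c d * (starRingEnd ℂ) (K c d))
      = ∑ c : ZMod p, ∑ d : ZMod p, ∑ q : U × U, ∑ r : U × U,
          ψ (c * (((q.1 : ZMod p) - (q.2 : ZMod p)) + ((r.1 : ZMod p) - (r.2 : ZMod p)))) *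
          ψ (d * (((q.1 : ZMod p)⁻¹ - (q.2 : ZMod p)⁻¹)
            + ((r.1 : ZMod p)⁻¹ - (r.2 : ZMod p)⁻¹))) :=
        Finset.sum_congr rfl fun c _ => Finset.sum_congr rfl fun d _ => K4 c d
    _ = ∑ q : U × U, ∑ r : U × U, ∑ c : ZMod p, ∑ d : ZMod p,
          ψ (c * (((q.1 : ZMod p) - (q.2 : ZMod p)) + ((r.1 : ZMod p) - (r.2 : ZMod p)))) *
          ψ (d * (((q.1 : ZMod p)⁻¹ - (q.2 : ZMod p)⁻¹)
            + ((r.1 : ZMod p)⁻¹ - (r.2 : ZMod p)⁻¹))) :=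
        swap4 _
    _ = ∑ q : U × U, ∑ r : U × U,
          (if ((q.1 : ZMod p) - (q.2 : ZMod p)) + ((r.1 : ZMod p) - (r.2 : ZMod p)) = 0
            then (p : ℂ) else 0) *
          (if ((q.1 : ZMod p)⁻¹ - (q.2 : ZMod p)⁻¹) + ((r.1 : ZMod p)⁻¹ - (r.2 : ZMod p)⁻¹) = 0
            then (p : ℂ) else 0) :=
        Finset.sum_congr rfl fun q _ => Finset.sum_congr rfl fun r _ => inner_cd _ _
    _ = ∑ z : (U × U) × (U × U),
          (if ((z.1.1 : ZMod p) - (z.1.2 : ZMod p)) + ((z.2.1 : ZMod p) - (z.2.2 : ZMod p)) = 0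
            then (p : ℂ) else 0) *
          (if ((z.1.1 : ZMod p)⁻¹ - (z.1.2 : ZMod p)⁻¹)
              + ((z.2.1 : ZMod p)⁻¹ - (z.2.2 : ZMod p)⁻¹) = 0
            then (p : ℂ) else 0) :=
        (Fintype.sum_prod_type (fun z : (U × U) × (U × U) =>
          (if ((z.1.1 : ZMod p) - (z.1.2 : ZMod p)) + ((z.2.1 : ZMod p) - (z.2.2 : ZMod p)) = 0
            then (p : ℂ) else 0) *
          (if ((z.1.1 : ZMod p)⁻¹ - (z.1.2 : ZMod p)⁻¹)
              + ((z.2.1 : ZMod p)⁻¹ - (z.2.2 : ZMod p)⁻¹) = 0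
            then (p : ℂ) else 0))).symm
    _ = ∑ w : (U × U) × (U × U),
          (if ((w.1.1 : ZMod p) - (w.2.1 : ZMod p)) + ((w.1.2 : ZMod p) - (w.2.2 : ZMod p)) = 0
            then (p : ℂ) else 0) *
          (if ((w.1.1 : ZMod p)⁻¹ - (w.2.1 : ZMod p)⁻¹)
              + ((w.1.2 : ZMod p)⁻¹ - (w.2.2 : ZMod p)⁻¹) = 0
            then (p : ℂ) else 0) :=
        Fintype.sum_equiv (Equiv.prodProdProdComm U U U U) _ _ (fun z => by rcases z with ⟨⟨a, b⟩, c, d⟩; rfl)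
    _ = ∑ s : U × U, ∑ t : U × U,
          (if ((s.1 : ZMod p) - (t.1 : ZMod p)) + ((s.2 : ZMod p) - (t.2 : ZMod p)) = 0
            then (p : ℂ) else 0) *
          (if ((s.1 : ZMod p)⁻¹ - (t.1 : ZMod p)⁻¹) + ((s.2 : ZMod p)⁻¹ - (t.2 : ZMod p)⁻¹) = 0
            then (p : ℂ) else 0) :=
        Fintype.sum_prod_type (fun w : (U × U) × (U × U) =>
          (if ((w.1.1 : ZMod p) - (w.2.1 : ZMod p)) + ((w.1.2 : ZMod p) - (w.2.2 : ZMod p)) = 0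
            then (p : ℂ) else 0) *
          (if ((w.1.1 : ZMod p)⁻¹ - (w.2.1 : ZMod p)⁻¹)
              + ((w.1.2 : ZMod p)⁻¹ - (w.2.2 : ZMod p)⁻¹) = 0
            then (p : ℂ) else 0))
    _ = ∑ s : U × U, (p : ℂ)^2 * ((sol s.1 s.2).card : ℂ) :=
        Finset.sum_congr rfl fun s _ => inner_y s.1 s.2
    _ = ∑ x1 : U, ∑ x2 : U, (p : ℂ)^2 * ((sol x1 x2).card : ℂ) :=
        Fintype.sum_prod_type (fun s : U × U => (p : ℂ)^2 * ((sol s.1 s.2).card : ℂ))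
    _ = (p : ℂ)^2 * (((p - 1) * (3 * p - 6) : ℕ) : ℂ) := by
        rw [← sum_card_sol hp2]
        push_cast
        rw [Finset.mul_sum]
        exact Finset.sum_congr rfl fun x1 _ => by rw [Finset.mul_sum]


lemma conj_real (x : ℂ) (hx : x = (p : ℂ) - 1) : (starRingEnd ℂ) x = (p : ℂ) - 1 := by
  rw [hx]; simp

lemma boundary : ∑ c : ZMod p,
    (K c 0 * (starRingEnd ℂ) (K c 0)) * (K c 0 * (starRingEnd ℂ) (K c 0))
    = ((p : ℂ) - 1)^4 + ((p : ℂ) - 1) := by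
  rw [← Finset.add_sum_erase _ _ (Finset.mem_univ (0 : ZMod p))]
  have h0 : K (0 : ZMod p) 0 = (p : ℂ) - 1 := by rw [K_right_zero]; simp
  have hrest : ∑ c ∈ univ.erase (0 : ZMod p),
      (K c 0 * (starRingEnd ℂ) (K c 0)) * (K c 0 * (starRingEnd ℂ) (K c 0))
      = (p : ℂ) - 1 := by
    have hconst : ∀ c ∈ univ.erase (0 : ZMod p),
        (K c 0 * (starRingEnd ℂ) (K c 0)) * (K c 0 * (starRingEnd ℂ) (K c 0)) = 1 := by
      intro c hc
      have hc0 : c ≠ 0 := (Finset.mem_erase.1 hc).1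
      have : K c 0 = -1 := by rw [K_right_zero, if_neg hc0]; ring
      rw [this]; simp
    rw [Finset.sum_congr rfl hconst, Finset.sum_const, Finset.card_erase_of_mem (Finset.mem_univ _),
      Finset.card_univ, ZMod.card p, nsmul_eq_mul, Nat.cast_sub hp.out.one_le]
    push_cast
    ring
  rw [h0, conj_real _ rfl, hrest]
  ring

lemma row (d : ZMod p) (hd : d ≠ 0) :
    ∑ c : ZMod p, (K c d * (starRingEnd ℂ) (K c d)) * (K c d * (starRingEnd ℂ) (K c d))
    = ∑ n : ZMod p, (K n 1 * (starRingEnd ℂ) (K n 1)) * (K n 1 * (starRingEnd ℂ) (K n 1)) := by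
  have hKd : ∀ c, K c d = K (c * d) 1 := by
    intro c
    have h := K_eq_f c (Units.mk0 d hd)
    simpa using h
  calc ∑ c : ZMod p, (K c d * (starRingEnd ℂ) (K c d)) * (K c d * (starRingEnd ℂ) (K c d))
      = ∑ c : ZMod p, (K (c * d) 1 * (starRingEnd ℂ) (K (c * d) 1)) *
          (K (c * d) 1 * (starRingEnd ℂ) (K (c * d) 1)) := by
        exact Finset.sum_congr rfl fun c _ => by rw [hKd c]
    _ = ∑ n : ZMod p, (K n 1 * (starRingEnd ℂ) (K n 1)) * (K n 1 * (starRingEnd ℂ) (K n 1)) :=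
        Fintype.sum_bijective (fun c => c * d) (mulRight_bijective₀ d hd) _ _ (fun c => rfl)

lemma decomp (hp2 : p ≠ 2) :
    (p : ℂ)^2 * (((p - 1) * (3 * p - 6) : ℕ) : ℂ)
    = ((p : ℂ) - 1) * (∑ n : ZMod p,
        (K n 1 * (starRingEnd ℂ) (K n 1)) * (K n 1 * (starRingEnd ℂ) (K n 1)))
      + (((p : ℂ) - 1)^4 + ((p : ℂ) - 1)) := by
  rw [← M4 hp2, Finset.sum_comm, ← Finset.add_sum_erase _ _ (Finset.mem_univ (0 : ZMod p)),
    boundary]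
  have hrows : ∀ d ∈ univ.erase (0 : ZMod p),
      ∑ c : ZMod p, (K c d * (starRingEnd ℂ) (K c d)) * (K c d * (starRingEnd ℂ) (K c d))
      = ∑ n : ZMod p, (K n 1 * (starRingEnd ℂ) (K n 1)) * (K n 1 * (starRingEnd ℂ) (K n 1)) :=
    fun d hd => row d (Finset.mem_erase.1 hd).1
  rw [Finset.sum_congr rfl hrows, Finset.sum_const, Finset.card_erase_of_mem (Finset.mem_univ _),
    Finset.card_univ, ZMod.card p, nsmul_eq_mul, Nat.cast_sub hp.out.one_le]
  push_cast
  ring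

lemma real_S2 : ∑ n : ZMod p, Complex.normSq (K n 1) = (p : ℝ)^2 - p := by
  have h1 : ((∑ n : ZMod p, Complex.normSq (K n 1) : ℝ) : ℂ)
      = ∑ n : ZMod p, K n 1 * (starRingEnd ℂ) (K n 1) := by
    push_cast
    exact Finset.sum_congr rfl fun n _ => (Complex.mul_conj (K n 1)).symm
  have h2 : ((∑ n : ZMod p, Complex.normSq (K n 1) : ℝ) : ℂ) = (((p : ℝ)^2 - p : ℝ) : ℂ) := by
    rw [h1, M2]
    push_cast
    ring
  exact_mod_cast h2

lemma real_S4 (hp2 : p ≠ 2) :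
    ∑ n : ZMod p, (Complex.normSq (K n 1))^2 = 2*(p : ℝ)^3 - 3*(p : ℝ)^2 - 3*(p : ℝ) := by
  have hp3 : 3 ≤ p := by
    have := hp.out.two_le
    rcases Nat.lt_or_ge p 3 with h | h
    · interval_cases p
      · exact absurd rfl hp2
    · exact h
  have hcastN : (((p - 1) * (3 * p - 6) : ℕ) : ℂ) = ((p : ℂ) - 1) * (3 * (p : ℂ) - 6) := by
    rw [Nat.cast_mul, Nat.cast_sub hp.out.one_le, Nat.cast_sub (by omega : 6 ≤ 3 * p)]
    push_cast
    ring
  have h1 : ((∑ n : ZMod p, (Complex.normSq (K n 1))^2 : ℝ) : ℂ)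
      = ∑ n : ZMod p, (K n 1 * (starRingEnd ℂ) (K n 1)) * (K n 1 * (starRingEnd ℂ) (K n 1)) := by
    push_cast
    refine Finset.sum_congr rfl fun n _ => ?_
    rw [Complex.mul_conj]
    push_cast
    ring
  have h2 : ((p : ℂ) - 1) * ((∑ n : ZMod p, (Complex.normSq (K n 1))^2 : ℝ) : ℂ)
      = ((p : ℂ) - 1) * ((2*(p : ℝ)^3 - 3*(p : ℝ)^2 - 3*(p : ℝ) : ℝ) : ℂ) := by
    rw [h1]
    have hd := decomp hp2
    rw [hcastN] at hd
    push_cast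
    linear_combination -hd
  have hne : ((p : ℂ) - 1) ≠ 0 := by
    intro h
    have : (p : ℂ) = 1 := by linear_combination h
    have : (p : ℕ) = 1 := by exact_mod_cast this
    omega
  have h3 := mul_left_cancel₀ hne h2
  exact_mod_cast h3

end Kloo

theorem stmt8 (p : ℕ) (hp : p.Prime) (hp2 : p ≠ 2) (a b : ℤ)
    (ha : ¬ (p : ℤ) ∣ a) (hb : ¬ (p : ℤ) ∣ b) :
    ‖Kl p a b‖ ≤ Real.sqrt ((p : ℝ) + (p : ℝ) ^ ((3 : ℝ) / 2)) := by
  haveI : Fact p.Prime := ⟨hp⟩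
  have hp3 : 3 ≤ p := by
    have h2 := hp.two_le
    rcases Nat.lt_or_ge p 3 with h | h
    · interval_cases p
      · exact absurd rfl hp2
    · exact h
  have ha0 : (a : ZMod p) ≠ 0 := by
    rw [Ne, ZMod.intCast_zmod_eq_zero_iff_dvd]; exact ha
  have hb0 : (b : ZMod p) ≠ 0 := by
    rw [Ne, ZMod.intCast_zmod_eq_zero_iff_dvd]; exact hb
  have hKl : Kl p a b = Kloo.K ((a : ZMod p) * (b : ZMod p)) 1 := by
    rw [Kloo.Kl_eq a b]
    have h := Kloo.K_eq_f (a : ZMod p) (Units.mk0 (b : ZMod p) hb0)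
    simpa using h
  set m : ZMod p := (a : ZMod p) * (b : ZMod p) with hm
  have hm0 : m ≠ 0 := mul_ne_zero ha0 hb0
  set G : ZMod p → ℝ := fun n => Complex.normSq (Kloo.K n 1) with hG
  set x : ℝ := G m with hx
  have hS : ∑ n : ZMod p, G n = (p : ℝ)^2 - p := Kloo.real_S2
  have hQ : ∑ n : ZMod p, (G n)^2 = 2*(p : ℝ)^3 - 3*(p : ℝ)^2 - 3*(p : ℝ) := Kloo.real_S4 hp2
  have hG0 : G 0 = 1 := by
    simp only [hG]
    rw [Kloo.f_zero]
    simp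
  have hmE : m ∈ (univ : Finset (ZMod p)).erase 0 :=
    Finset.mem_erase.2 ⟨hm0, Finset.mem_univ _⟩
  have hsum1 : ∑ n ∈ ((univ : Finset (ZMod p)).erase 0).erase m, G n
      = (p : ℝ)^2 - p - 1 - x := by
    rw [Finset.sum_erase_eq_sub hmE, Finset.sum_erase_eq_sub (Finset.mem_univ (0 : ZMod p)),
      hS, hG0]
  have hsum2 : ∑ n ∈ ((univ : Finset (ZMod p)).erase 0).erase m, (G n)^2
      = 2*(p : ℝ)^3 - 3*(p : ℝ)^2 - 3*(p : ℝ) - 1 - x^2 := by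
    rw [Finset.sum_erase_eq_sub hmE, Finset.sum_erase_eq_sub (Finset.mem_univ (0 : ZMod p)),
      hQ, hG0]
    ring
  have hcard : ((((univ : Finset (ZMod p)).erase 0).erase m).card : ℝ) = (p : ℝ) - 2 := by
    rw [Finset.card_erase_of_mem hmE, Finset.card_erase_of_mem (Finset.mem_univ _),
      Finset.card_univ, ZMod.card p]
    have he : p - 1 - 1 = p - 2 := by omega
    rw [he, Nat.cast_sub (by omega : 2 ≤ p)]
    push_cast
    ring
  have hCS := sq_sum_le_card_mul_sum_sq
    (s := (((univ : Finset (ZMod p)).erase 0).erase m)) (f := G)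
  rw [hsum1, hsum2, hcard] at hCS
  have hx0 : 0 ≤ x := Complex.normSq_nonneg _
  set r : ℝ := Real.sqrt (p : ℝ) with hr
  have hr2 : r^2 = (p : ℝ) := Real.sq_sqrt (by positivity)
  have hr0 : 0 ≤ r := Real.sqrt_nonneg _
  have hP3 : (3 : ℝ) ≤ (p : ℝ) := by exact_mod_cast hp3
  clear_value r x G m
  have hxle : x ≤ (p : ℝ) + (p : ℝ) * r := by
    by_contra hcon
    push_neg at hcon
    clear hsum1 hsum2 hS hQ hG0 hmE hKl hm hG hx hr
    obtain ⟨P, hP⟩ : ∃ P : ℝ, (p : ℝ) = P := ⟨_, rfl⟩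
    obtain ⟨X, hX⟩ : ∃ X : ℝ, x = X := ⟨_, rfl⟩
    obtain ⟨R, hR⟩ : ∃ R : ℝ, r = R := ⟨_, rfl⟩
    rw [hP] at hCS hr2 hP3 hcon
    rw [hX] at hCS hcon hx0
    rw [hR] at hr2 hr0 hcon
    have key1 : (P - 1)*X^2 - 2*(P^2 - P - 1)*X + (P^2 - P - 1)^2
        ≤ (P - 2)*(2*P^3 - 3*P^2 - 3*P - 1) := by nlinarith [hCS]
    have key2 : (P - 1)*(P + P*R)^2 - 2*(P^2 - P - 1)*(P + P*R) + (P^2 - P - 1)^2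
        = (P - 2)*(2*P^3 - 3*P^2 - 3*P - 1) + (3*P^3 - 3*P^2 - P - 1 + 2*P*R) := by
      linear_combination ((P - 1)*P^2) * hr2
    have key3 : (0 : ℝ) < X - (P + P*R) := sub_pos.2 hcon
    have hpos1 : (0 : ℝ) < P - 1 := by linarith
    have hprod : (0 : ℝ) < (P - 1) * (X - (P + P*R)) := mul_pos hpos1 key3
    have h1 : (0 : ℝ) ≤ (P^2 - P) * R := mul_nonneg (by nlinarith) hr0
    have key4 : (0 : ℝ) < (P - 1)*(X + (P + P*R)) - 2*(P^2 - P - 1) := by nlinarith [hprod, h1]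
    have key5 : (0 : ℝ) < (X - (P + P*R)) * ((P - 1)*(X + (P + P*R)) - 2*(P^2 - P - 1)) :=
      mul_pos key3 key4
    have hid : (P - 1)*X^2 - 2*(P^2 - P - 1)*X
          - ((P - 1)*(P + P*R)^2 - 2*(P^2 - P - 1)*(P + P*R))
        = (X - (P + P*R)) * ((P - 1)*(X + (P + P*R)) - 2*(P^2 - P - 1)) := by ring
    have hpos2 : (0 : ℝ) < 3*P^3 - 3*P^2 - P - 1 + 2*P*R := by nlinarith [hr0]
    linarith [key1, key2, key5, hid, hpos2]
  have h32 : (p : ℝ) ^ ((3 : ℝ)/2) = (p : ℝ) * r := by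
    rw [show (3 : ℝ)/2 = 1 + 1/2 by norm_num, Real.rpow_add (by positivity), Real.rpow_one,
      ← Real.sqrt_eq_rpow, ← hr]
  have hxeq : ‖Kl p a b‖ = Real.sqrt x := by
    rw [hKl, Complex.norm_def, hx, hG]
  rw [hxeq, h32]
  exact Real.sqrt_le_sqrt (by linarith)
end

section
/- For an odd prime p and integers a, b with p ∤ ab, |K(a,b)| ≤ 2^{1/2} p^{3/4}, where K(a,b) = ∑_{x=1}^{p-1} e_p(a x + b x̄). -/
open Finset

section Aux

variable {p : ℕ} [Fact p.Prime]

/-- Kloosterman sum indexed by `ZMod p`. -/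
noncomputable def Kc (p : ℕ) [NeZero p] (a b : ZMod p) : ℂ :=
  ∑ x ∈ Finset.univ.erase (0 : ZMod p), ZMod.stdAddChar (a * x + b * x⁻¹)

lemma conj_stdAddChar (x : ZMod p) :
    (starRingEnd ℂ) (ZMod.stdAddChar x) = ZMod.stdAddChar (-x) := by
  rw [AddChar.map_neg_eq_inv, ZMod.stdAddChar_apply,
    ← Circle.coe_inv, ← Circle.coe_inv_eq_conj]

/-- Bridge: `Kl` equals `Kc`. -/
lemma Kl_eq_Kc (a b : ℤ) : Kl p a b = Kc p (a : ZMod p) (b : ZMod p) := by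
  have hp1 : 1 < p := (Fact.out : p.Prime).one_lt
  unfold Kl Kc
  refine Finset.sum_nbij' (i := fun (x : ℕ) => (x : ZMod p)) (j := fun z => z.val)
    ?_ ?_ ?_ ?_ ?_
  · intro x hx
    simp only [Finset.mem_Icc] at hx
    simp only [Finset.mem_erase, Finset.mem_univ, and_true]
    rw [Ne, ZMod.natCast_eq_zero_iff]
    intro hdvd
    have h1 : x ≠ 0 := by omega
    have := Nat.le_of_dvd (Nat.pos_of_ne_zero h1) hdvd
    omega
  · intro z hz
    simp only [Finset.mem_erase, Finset.mem_univ, and_true] at hz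
    simp only [Finset.mem_Icc]
    have h1 : z.val ≠ 0 := fun h => hz (by rwa [← ZMod.val_eq_zero])
    have h2 : z.val < p := ZMod.val_lt z
    omega
  · intro x hx
    simp only [Finset.mem_Icc] at hx
    exact ZMod.val_natCast_of_lt (by omega)
  · intro z _
    exact ZMod.natCast_zmod_val z
  · intro x hx
    have key : ∀ j : ℤ, ep p j = ZMod.stdAddChar ((j : ZMod p)) := by
      intro j; rw [ZMod.stdAddChar_coe]; rfl
    rw [key]
    congr 1
    push_cast [ZMod.natCast_val, ZMod.cast_id]
    ring

/-- Invariance: `Kc (a*t) (b*t⁻¹) = Kc a b` for `t ≠ 0`. -/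
lemma Kc_invariance (a b t : ZMod p) (ht : t ≠ 0) :
    Kc p (a * t) (b * t⁻¹) = Kc p a b := by
  unfold Kc
  refine Finset.sum_nbij' (i := fun x => t * x) (j := fun x => t⁻¹ * x) ?_ ?_ ?_ ?_ ?_
  · intro x hx
    simp only [Finset.mem_erase, Finset.mem_univ, and_true] at hx ⊢
    exact mul_ne_zero ht hx
  · intro x hx
    simp only [Finset.mem_erase, Finset.mem_univ, and_true] at hx ⊢
    exact mul_ne_zero (inv_ne_zero ht) hx
  · intro x _; field_simp
  · intro x _; field_simp
  · intro x hx
    simp only [Finset.mem_erase, Finset.mem_univ, and_true] at hx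
    congr 1
    rw [mul_inv]
    field_simp

/-- The solution-count finset. -/
noncomputable def SolSet (p : ℕ) [Fact p.Prime] : Finset (ZMod p × ZMod p × ZMod p × ZMod p) :=
  ((Finset.univ.erase (0 : ZMod p)) ×ˢ (Finset.univ.erase (0 : ZMod p)) ×ˢ
    (Finset.univ.erase (0 : ZMod p)) ×ˢ (Finset.univ.erase (0 : ZMod p))).filter
    (fun q => q.2.2.1 + q.2.2.2 - q.1 - q.2.1 = 0 ∧
      q.2.2.1⁻¹ + q.2.2.2⁻¹ - q.1⁻¹ - q.2.1⁻¹ = 0)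

/-- Fourth moment identity. -/
lemma expand_Kc (a b : ZMod p) :
    ((‖Kc p a b‖) ^ 4 : ℂ) =
      ∑ q ∈ ((Finset.univ.erase (0 : ZMod p)) ×ˢ (Finset.univ.erase (0 : ZMod p)) ×ˢ
        (Finset.univ.erase (0 : ZMod p)) ×ˢ (Finset.univ.erase (0 : ZMod p))),
        ZMod.stdAddChar (a * (q.2.2.1 + q.2.2.2 - q.1 - q.2.1)) *
          ZMod.stdAddChar (b * (q.2.2.1⁻¹ + q.2.2.2⁻¹ - q.1⁻¹ - q.2.1⁻¹)) := by
  have habs : ((‖Kc p a b‖) ^ 4 : ℂ) =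
      (Kc p a b) ^ 2 * ((starRingEnd ℂ) (Kc p a b)) ^ 2 := by
    have h1 : (Kc p a b) ^ 2 * ((starRingEnd ℂ) (Kc p a b)) ^ 2 =
        ((Kc p a b) * (starRingEnd ℂ) (Kc p a b)) ^ 2 := by ring
    rw [h1, Complex.mul_conj]
    push_cast [Complex.normSq_eq_norm_sq]
    ring
  have hconj : (starRingEnd ℂ) (Kc p a b) =
      ∑ x ∈ Finset.univ.erase (0 : ZMod p), ZMod.stdAddChar (-(a * x + b * x⁻¹)) := by
    rw [Kc, map_sum]
    exact Finset.sum_congr rfl fun x _ => conj_stdAddChar _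
  rw [habs, hconj, Kc]
  simp only [pow_two]
  simp only [Finset.sum_product, Finset.sum_mul, Finset.mul_sum]
  refine Finset.sum_congr rfl fun x1 _ => Finset.sum_congr rfl fun x2 _ =>
    Finset.sum_congr rfl fun x3 _ => Finset.sum_congr rfl fun x4 _ => ?_
  simp only [← AddChar.map_add_eq_mul]
  congr 1
  ring

lemma fourth_moment :
    ∑ a : ZMod p, ∑ b : ZMod p, ((‖Kc p a b‖) ^ 4 : ℂ) =
      (p : ℂ) ^ 2 * (SolSet p).card := by
  have hsum : ∀ u : ZMod p, ∑ x : ZMod p, ZMod.stdAddChar (x * u) =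
      if u = 0 then (p : ℂ) else 0 := by
    intro u
    rw [AddChar.sum_mulShift u (ZMod.isPrimitive_stdAddChar p)]
    simp [ZMod.card]
  simp only [expand_Kc]
  rw [show (∑ a : ZMod p, ∑ b : ZMod p,
      ∑ q ∈ ((Finset.univ.erase (0 : ZMod p)) ×ˢ (Finset.univ.erase (0 : ZMod p)) ×ˢ
        (Finset.univ.erase (0 : ZMod p)) ×ˢ (Finset.univ.erase (0 : ZMod p))),
        ZMod.stdAddChar (a * (q.2.2.1 + q.2.2.2 - q.1 - q.2.1)) *
          ZMod.stdAddChar (b * (q.2.2.1⁻¹ + q.2.2.2⁻¹ - q.1⁻¹ - q.2.1⁻¹))) =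
      ∑ q ∈ ((Finset.univ.erase (0 : ZMod p)) ×ˢ (Finset.univ.erase (0 : ZMod p)) ×ˢ
        (Finset.univ.erase (0 : ZMod p)) ×ˢ (Finset.univ.erase (0 : ZMod p))),
        ∑ a : ZMod p, ∑ b : ZMod p,
        ZMod.stdAddChar (a * (q.2.2.1 + q.2.2.2 - q.1 - q.2.1)) *
          ZMod.stdAddChar (b * (q.2.2.1⁻¹ + q.2.2.2⁻¹ - q.1⁻¹ - q.2.1⁻¹)) from by
    exact (Finset.sum_congr rfl fun a _ => Finset.sum_comm).trans Finset.sum_comm]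
  have hterm : ∀ q : ZMod p × ZMod p × ZMod p × ZMod p,
      (∑ a : ZMod p, ∑ b : ZMod p,
        ZMod.stdAddChar (a * (q.2.2.1 + q.2.2.2 - q.1 - q.2.1)) *
          ZMod.stdAddChar (b * (q.2.2.1⁻¹ + q.2.2.2⁻¹ - q.1⁻¹ - q.2.1⁻¹))) =
      if (q.2.2.1 + q.2.2.2 - q.1 - q.2.1 = 0 ∧
          q.2.2.1⁻¹ + q.2.2.2⁻¹ - q.1⁻¹ - q.2.1⁻¹ = 0) then (p : ℂ) ^ 2 else 0 := by
    intro q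
    rw [← Finset.sum_mul_sum]
    rw [hsum, hsum]
    by_cases h1 : q.2.2.1 + q.2.2.2 - q.1 - q.2.1 = 0 <;>
      by_cases h2 : q.2.2.1⁻¹ + q.2.2.2⁻¹ - q.1⁻¹ - q.2.1⁻¹ = 0 <;>
      simp [h1, h2] <;> ring
  trans (∑ q ∈ ((Finset.univ.erase (0 : ZMod p)) ×ˢ (Finset.univ.erase (0 : ZMod p)) ×ˢ
      (Finset.univ.erase (0 : ZMod p)) ×ˢ (Finset.univ.erase (0 : ZMod p))),
      if (q.2.2.1 + q.2.2.2 - q.1 - q.2.1 = 0 ∧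
          q.2.2.1⁻¹ + q.2.2.2⁻¹ - q.1⁻¹ - q.2.1⁻¹ = 0) then (p : ℂ) ^ 2 else 0)
  · exact Finset.sum_congr rfl fun q _ => hterm q
  rw [Finset.sum_ite, Finset.sum_const, Finset.sum_const_zero, add_zero, nsmul_eq_mul, mul_comm]
  rw [SolSet]

/-- Counting: `N ≤ 3 (p-1)²`. -/
lemma solset_card_le : (SolSet p).card ≤ 3 * (p - 1) ^ 2 := by
  classical
  set E := Finset.univ.erase (0 : ZMod p) with hE
  have hcardE : E.card = p - 1 := by
    rw [hE, Finset.card_erase_of_mem (Finset.mem_univ _), Finset.card_univ, ZMod.card]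
  set A : Finset (ZMod p × ZMod p × ZMod p × ZMod p) :=
    (E ×ˢ E).image (fun x => (x.1, x.2, x.1, x.2)) with hA
  set B : Finset (ZMod p × ZMod p × ZMod p × ZMod p) :=
    (E ×ˢ E).image (fun x => (x.1, x.2, x.2, x.1)) with hB
  set C : Finset (ZMod p × ZMod p × ZMod p × ZMod p) :=
    (E ×ˢ E).image (fun x => (x.1, -x.1, x.2, -x.2)) with hC
  have hsub : SolSet p ⊆ A ∪ B ∪ C := by
    intro q hq
    obtain ⟨x1, x2, x3, x4⟩ := q
    simp only [SolSet, Finset.mem_filter, Finset.mem_product, Finset.mem_erase,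
      Finset.mem_univ, and_true] at hq
    obtain ⟨⟨h1, h2, h3, h4⟩, hs, hi⟩ := hq
    have hmem : ∀ z : ZMod p, z ≠ 0 → z ∈ E := fun z hz => by
      simp [hE, hz]
    simp only [Finset.mem_union, hA, hB, hC, Finset.mem_image, Finset.mem_product,
      Finset.mem_erase, Finset.mem_univ, and_true, Prod.exists]
    by_cases hs0 : x1 + x2 = 0
    · -- case x2 = -x1, x4 = -x3
      right
      refine ⟨x1, x3, ⟨hmem _ h1, hmem _ h3⟩, ?_⟩
      have hx2 : x2 = -x1 := by linear_combination hs0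
      have hx4 : x4 = -x3 := by linear_combination hs + hs0
      rw [hx2, hx4]
    · -- main case
      have hsum : x1 + x2 = x3 + x4 := by linear_combination -hs
      have key : x1 * x2 * x3 * x4 * (x3⁻¹ + x4⁻¹ - x1⁻¹ - x2⁻¹) =
          x1 * x2 * x4 + x1 * x2 * x3 - x2 * x3 * x4 - x1 * x3 * x4 := by
        field_simp
      rw [hi, mul_zero] at key
      have h5 : x3 * x4 * (x1 + x2) = x1 * x2 * (x3 + x4) := by linear_combination key
      have hprod : x1 * x2 = x3 * x4 := by
        have h6 : (x3 * x4 - x1 * x2) * (x1 + x2) = 0 := by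
          linear_combination h5 - x1 * x2 * hsum
        rcases mul_eq_zero.mp h6 with h | h
        · linear_combination -h
        · exact absurd h hs0
      have hfac : (x3 - x1) * (x3 - x2) = 0 := by
        linear_combination (-x3) * hsum + hprod
      rcases mul_eq_zero.mp hfac with h | h
      · -- x3 = x1, x4 = x2
        left; left
        have hx3 : x3 = x1 := by linear_combination h
        have hx4 : x4 = x2 := by
          rw [hx3] at hsum
          linear_combination -hsum
        exact ⟨x1, x2, ⟨hmem _ h1, hmem _ h2⟩, by rw [hx3, hx4]⟩
      · -- x3 = x2, x4 = x1
        left; right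
        have hx3 : x3 = x2 := by linear_combination h
        have hx4 : x4 = x1 := by
          rw [hx3] at hsum
          linear_combination -hsum
        exact ⟨x1, x2, ⟨hmem _ h1, hmem _ h2⟩, by rw [hx3, hx4]⟩
  calc (SolSet p).card ≤ (A ∪ B ∪ C).card := Finset.card_le_card hsub
    _ ≤ (A ∪ B).card + C.card := Finset.card_union_le _ _
    _ ≤ A.card + B.card + C.card := by
        have := Finset.card_union_le A B
        omega
    _ ≤ 3 * (p - 1) ^ 2 := by
        have hAc : A.card ≤ (p - 1) ^ 2 := by
          calc A.card ≤ (E ×ˢ E).card := Finset.card_image_le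
            _ = (p - 1) ^ 2 := by rw [Finset.card_product, hcardE]; ring
        have hBc : B.card ≤ (p - 1) ^ 2 := by
          calc B.card ≤ (E ×ˢ E).card := Finset.card_image_le
            _ = (p - 1) ^ 2 := by rw [Finset.card_product, hcardE]; ring
        have hCc : C.card ≤ (p - 1) ^ 2 := by
          calc C.card ≤ (E ×ˢ E).card := Finset.card_image_le
            _ = (p - 1) ^ 2 := by rw [Finset.card_product, hcardE]; ring
        omega

end Aux

theorem stmt9 (p : ℕ) (hp : p.Prime) (hp2 : p ≠ 2) (a b : ℤ)
    (ha : ¬ (p : ℤ) ∣ a) (hb : ¬ (p : ℤ) ∣ b) :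
    ‖Kl p a b‖ ≤ (2 : ℝ) ^ ((1 : ℝ) / 2) * (p : ℝ) ^ ((3 : ℝ) / 4) := by
  haveI : Fact p.Prime := ⟨hp⟩
  have hp1 : 1 ≤ p := hp.one_lt.le
  have hA : (a : ZMod p) ≠ 0 := by
    rwa [Ne, ZMod.intCast_zmod_eq_zero_iff_dvd]
  have hB : (b : ZMod p) ≠ 0 := by
    rwa [Ne, ZMod.intCast_zmod_eq_zero_iff_dvd]
  set E := Finset.univ.erase (0 : ZMod p) with hE
  have hcardE : E.card = p - 1 := by
    rw [hE, Finset.card_erase_of_mem (Finset.mem_univ _), Finset.card_univ, ZMod.card]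
  set M : ℝ := ‖Kc p (a : ZMod p) (b : ZMod p)‖ with hM
  have hM0 : 0 ≤ M := norm_nonneg _
  set S : ℝ := ∑ a' : ZMod p, ∑ b' : ZMod p, (‖Kc p a' b'‖) ^ 4 with hS
  have hSval : S = (p : ℝ) ^ 2 * (SolSet p).card := by
    have h := fourth_moment (p := p)
    have hcast : ((S : ℝ) : ℂ) = (((p : ℝ) ^ 2 * ((SolSet p).card : ℝ) : ℝ) : ℂ) := by
      rw [hS]
      push_cast
      exact h
    exact_mod_cast hcast
  set f : ZMod p × ZMod p → ℝ := fun q => (‖Kc p q.1 q.2‖) ^ 4 with hf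
  have hstep1 : ((p : ℝ) - 1) * M ^ 4 ≤ S := by
    have hinv : ∀ t ∈ E, f ((a : ZMod p) * t, (b : ZMod p) * t⁻¹) = M ^ 4 := by
      intro t ht
      simp only [hE, Finset.mem_erase, Finset.mem_univ, and_true] at ht
      simp only [hf]
      rw [Kc_invariance _ _ t ht]
    calc ((p : ℝ) - 1) * M ^ 4 = ∑ _t ∈ E, M ^ 4 := by
          rw [Finset.sum_const, nsmul_eq_mul, hcardE]
          congr 1
          push_cast [Nat.cast_sub hp1]
          ring
      _ = ∑ t ∈ E, f ((a : ZMod p) * t, (b : ZMod p) * t⁻¹) :=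
          (Finset.sum_congr rfl hinv).symm
      _ = ∑ q ∈ E.image (fun t => ((a : ZMod p) * t, (b : ZMod p) * t⁻¹)), f q := by
          rw [Finset.sum_image]
          intro t1 _ t2 _ h
          exact mul_left_cancel₀ hA (congrArg Prod.fst h)
      _ ≤ ∑ q ∈ (Finset.univ : Finset (ZMod p)) ×ˢ (Finset.univ : Finset (ZMod p)), f q := by
          refine Finset.sum_le_sum_of_subset_of_nonneg ?_ (fun q _ _ => by positivity)
          intro q _
          simp [Finset.mem_product]
      _ = S := by rw [Finset.sum_product]
  have hcount : ((SolSet p).card : ℝ) ≤ 3 * ((p : ℝ) - 1) ^ 2 := by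
    calc ((SolSet p).card : ℝ) ≤ ((3 * (p - 1) ^ 2 : ℕ) : ℝ) := by
          exact_mod_cast solset_card_le (p := p)
      _ = 3 * ((p : ℝ) - 1) ^ 2 := by push_cast [Nat.cast_sub hp1]; ring
  have hppos : (0 : ℝ) < p := by positivity
  have hp2' : (2 : ℝ) ≤ p := by exact_mod_cast hp.two_le
  have hpos : (0 : ℝ) < (p : ℝ) - 1 := by linarith
  have hM4 : M ^ 4 ≤ 4 * (p : ℝ) ^ 3 := by
    have h1 : ((p : ℝ) - 1) * M ^ 4 ≤ ((p : ℝ) - 1) * (3 * (p : ℝ) ^ 2 * ((p : ℝ) - 1)) := by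
      calc ((p : ℝ) - 1) * M ^ 4 ≤ S := hstep1
        _ = (p : ℝ) ^ 2 * (SolSet p).card := hSval
        _ ≤ (p : ℝ) ^ 2 * (3 * ((p : ℝ) - 1) ^ 2) := by nlinarith
        _ = ((p : ℝ) - 1) * (3 * (p : ℝ) ^ 2 * ((p : ℝ) - 1)) := by ring
    have h2 : M ^ 4 ≤ 3 * (p : ℝ) ^ 2 * ((p : ℝ) - 1) := le_of_mul_le_mul_left h1 hpos
    nlinarith
  have hgoal : ‖Kl p a b‖ = M := by rw [Kl_eq_Kc, hM]
  rw [hgoal]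
  have h4 : M ≤ (4 * (p : ℝ) ^ 3) ^ ((1 : ℝ) / 4) := by
    have hr := Real.rpow_le_rpow (by positivity) hM4 (by norm_num : (0 : ℝ) ≤ 1 / 4)
    calc M = (M ^ (4 : ℕ)) ^ ((1 : ℝ) / 4) := by
          rw [← Real.rpow_natCast M 4, ← Real.rpow_mul hM0]
          norm_num
      _ ≤ _ := hr
  calc M ≤ (4 * (p : ℝ) ^ 3) ^ ((1 : ℝ) / 4) := h4
    _ = (2 : ℝ) ^ ((1 : ℝ) / 2) * (p : ℝ) ^ ((3 : ℝ) / 4) := by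
        rw [Real.mul_rpow (by norm_num) (by positivity)]
        congr 1
        · rw [show (4 : ℝ) = 2 ^ (2 : ℕ) by norm_num, ← Real.rpow_natCast 2 2,
            ← Real.rpow_mul (by norm_num)]
          norm_num
        · rw [← Real.rpow_natCast ((p : ℝ)) 3, ← Real.rpow_mul (by positivity)]
          norm_num
end

section
/- For an odd prime p and integers a, b with p ∤ ab, K(a,b)^2 ≤ p + p^{3/2}. -/
open Finset

noncomputable section
namespace KloostAux

variable (p : ℕ)

def zet : ℂ := Complex.exp (2 * Real.pi * Complex.I / p)

lemma zet_pow (hp : p ≠ 0) : zet p ^ p = 1 :=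
  (Complex.isPrimitiveRoot_exp p hp).pow_eq_one

def E [NeZero p] : AddChar (ZMod p) ℂ := AddChar.zmodChar p (zet_pow p (NeZero.ne p))

lemma E_apply [NeZero p] (x : ZMod p) : E p x = zet p ^ x.val :=
  AddChar.zmodChar_apply _ x

lemma E_add [NeZero p] (x y : ZMod p) : E p (x + y) = E p x * E p y :=
  AddChar.map_add_eq_mul _ x y

lemma E_zero [NeZero p] : E p 0 = 1 := AddChar.map_zero_eq_one _

lemma E_neg_mul [NeZero p] (x : ZMod p) : E p (-x) * E p x = 1 := by
  rw [← E_add, neg_add_cancel, E_zero]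

lemma E_ne_zero [NeZero p] (x : ZMod p) : E p x ≠ 0 := by
  intro h0
  have h3 := E_neg_mul p x
  rw [h0, mul_zero] at h3
  exact one_ne_zero h3.symm

lemma conj_E [NeZero p] (x : ZMod p) :
    (starRingEnd ℂ) (E p x) = E p (-x) := by
  have h1 : E p x = Complex.exp ((x.val : ℂ) * (2 * Real.pi * Complex.I / p)) := by
    rw [E_apply, zet, Complex.exp_nat_mul]
  have h2 : (starRingEnd ℂ) (E p x) * E p x = 1 := by
    rw [h1, ← Complex.exp_conj, ← Complex.exp_add]
    have : (starRingEnd ℂ) ((x.val : ℂ) * (2 * Real.pi * Complex.I / p)) =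
        -((x.val : ℂ) * (2 * Real.pi * Complex.I / p)) := by
      simp only [map_mul, map_div₀, Complex.conj_I, Complex.conj_natCast,
        Complex.conj_ofReal, map_ofNat]
      ring
    rw [this, neg_add_cancel, Complex.exp_zero]
  exact mul_right_cancel₀ (E_ne_zero p x) (h2.trans (E_neg_mul p x).symm)

lemma sum_E_mul [NeZero p] (z : ZMod p) :
    ∑ a : ZMod p, E p (a * z) = if z = 0 then (p : ℂ) else 0 := by
  split_ifs with hz
  · subst hz
    simp [E_zero, ZMod.card]
  · have hprim := AddChar.zmodChar_primitive_of_primitive_root p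
      (Complex.isPrimitiveRoot_exp p (NeZero.ne p))
    have hne : (E p).mulShift z ≠ 1 := hprim hz
    have := AddChar.sum_eq_zero_of_ne_one hne
    rw [← this]
    exact Finset.sum_congr rfl fun a _ => by
      rw [AddChar.mulShift_apply, mul_comm]

lemma ep_eq [NeZero p] (m : ℤ) : ep p m = E p ((m : ZMod p)) := by
  have hp : p ≠ 0 := NeZero.ne p
  have hpc : (p : ℂ) ≠ 0 := Nat.cast_ne_zero.mpr hp
  set v : ℕ := ((m : ZMod p)).val with hv
  have hdvd : (p : ℤ) ∣ m - v := by
    rw [← ZMod.intCast_zmod_eq_zero_iff_dvd]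
    push_cast
    rw [hv, ZMod.natCast_val, ZMod.cast_id]
    ring
  obtain ⟨k, hk⟩ := hdvd
  have hm : (m : ℂ) = (v : ℂ) + (p : ℂ) * k := by
    have : (m : ℤ) = v + p * k := by linarith [hk]
    exact_mod_cast congrArg (Int.cast : ℤ → ℂ) this
  rw [ep, E_apply, zet]
  rw [show 2 * Real.pi * Complex.I * m / p = (m : ℂ) * (2 * Real.pi * Complex.I / p) by ring, hm]
  rw [show ((v : ℂ) + (p : ℂ) * (k : ℂ)) * (2 * Real.pi * Complex.I / p)
      = (v : ℂ) * (2 * Real.pi * Complex.I / p) + (k : ℂ) * (2 * Real.pi * Complex.I) by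
    field_simp]
  rw [Complex.exp_add, Complex.exp_int_mul, Complex.exp_two_pi_mul_I, one_zpow, mul_one,
    Complex.exp_nat_mul]


def X [NeZero p] : Finset (ZMod p) := Finset.univ.erase 0

lemma X_def [NeZero p] : X p = Finset.univ.erase 0 := rfl

lemma mem_X [NeZero p] {x : ZMod p} : x ∈ X p ↔ x ≠ 0 := by
  simp [X]

lemma card_X [NeZero p] : (X p).card = p - 1 := by
  rw [X, Finset.card_erase_of_mem (Finset.mem_univ 0), Finset.card_univ, ZMod.card]

def S [NeZero p] (a c : ZMod p) : ℂ := ∑ x ∈ X p, E p (a * x + c * x⁻¹)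

lemma Kl_eq [NeZero p] (a b : ℤ) : Kl p a b = S p (a : ZMod p) (b : ZMod p) := by
  have hp : p ≠ 0 := NeZero.ne p
  have hp1 : 1 ≤ p := Nat.one_le_iff_ne_zero.mpr hp
  rw [Kl, S]
  refine Finset.sum_nbij' (fun n => (n : ZMod p)) (fun z => z.val) ?_ ?_ ?_ ?_ ?_
  · intro n hn
    rw [Finset.mem_Icc] at hn
    have hlt : n < p := lt_of_le_of_lt hn.2 (Nat.sub_lt (Nat.pos_of_ne_zero hp) one_pos)
    show (n : ZMod p) ∈ X p
    rw [mem_X]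
    intro h0
    have : (↑n : ZMod p).val = n := ZMod.val_natCast_of_lt hlt
    rw [h0, ZMod.val_zero] at this
    omega
  · intro z hz
    rw [mem_X] at hz
    show z.val ∈ Finset.Icc 1 (p - 1)
    rw [Finset.mem_Icc]
    have h1 := (ZMod.val_eq_zero z).not.mpr hz
    have h2 := ZMod.val_lt z
    omega
  · intro n hn
    rw [Finset.mem_Icc] at hn
    have hlt : n < p := lt_of_le_of_lt hn.2 (Nat.sub_lt (Nat.pos_of_ne_zero hp) one_pos)
    exact ZMod.val_natCast_of_lt hlt
  · intro z _
    exact ZMod.natCast_rightInverse z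
  · intro n _
    rw [ep_eq]
    show _ = E p ((a : ZMod p) * (n : ZMod p) + (b : ZMod p) * ((n : ZMod p))⁻¹)
    congr 1
    push_cast
    congr 1
    congr 1
    exact ZMod.natCast_rightInverse _

lemma S_zero_zero [NeZero p] : S p 0 0 = (p : ℂ) - 1 := by
  have hp1 : 1 ≤ p := Nat.one_le_iff_ne_zero.mpr (NeZero.ne p)
  rw [S]
  have h : ∀ x ∈ X p, E p ((0 : ZMod p) * x + 0 * x⁻¹) = 1 := by
    intro x _
    simp [E_zero]
  rw [Finset.sum_congr rfl h, Finset.sum_const, card_X, nsmul_eq_mul, mul_one]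
  push_cast [hp1]
  ring

lemma S_a_zero [NeZero p] {a : ZMod p} (ha : a ≠ 0) : S p a 0 = -1 := by
  have key := sum_E_mul p a
  rw [if_neg ha] at key
  rw [← Finset.sum_erase_add Finset.univ (fun x => E p (x * a)) (Finset.mem_univ 0)] at key
  simp only [zero_mul, E_zero] at key
  rw [S]
  have h : ∀ x ∈ X p, E p (a * x + 0 * x⁻¹) = E p (x * a) := by
    intro x _
    congr 1
    ring
  rw [Finset.sum_congr rfl h, X_def]
  linear_combination key

lemma S_zero_c [Fact p.Prime] {c : ZMod p} (hc : c ≠ 0) : S p 0 c = -1 := by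
  have h1 : S p 0 c = S p c 0 := by
    rw [S, S]
    refine Finset.sum_nbij' (fun x => x⁻¹) (fun x => x⁻¹) ?_ ?_ ?_ ?_ ?_
    · intro x hx
      rw [mem_X] at hx ⊢
      exact inv_ne_zero hx
    · intro x hx
      rw [mem_X] at hx ⊢
      exact inv_ne_zero hx
    · intro x _; exact inv_inv x
    · intro x _; exact inv_inv x
    · intro x _
      show E p (0 * x + c * x⁻¹) = E p (c * x⁻¹ + 0 * (x⁻¹)⁻¹)
      congr 1
      ring
  rw [h1]
  exact S_a_zero p hc

lemma S_mul [Fact p.Prime] {a : ZMod p} (ha : a ≠ 0) (c : ZMod p) :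
    S p a c = S p 1 (a * c) := by
  rw [S, S]
  refine Finset.sum_nbij' (fun x => a * x) (fun x => a⁻¹ * x) ?_ ?_ ?_ ?_ ?_
  · intro x hx
    rw [mem_X] at hx ⊢
    exact mul_ne_zero ha hx
  · intro x hx
    rw [mem_X] at hx ⊢
    exact mul_ne_zero (inv_ne_zero ha) hx
  · intro x _
    show a⁻¹ * (a * x) = x
    field_simp
  · intro x _
    show a * (a⁻¹ * x) = x
    field_simp
  · intro x hx
    rw [mem_X] at hx
    show E p (a * x + c * x⁻¹) = E p (1 * (a * x) + a * c * (a * x)⁻¹)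
    congr 1
    rw [mul_inv]
    field_simp

section comm
variable {M : Type*} [AddCommMonoid M]

lemma comm3 {α β γ : Type*} (s : Finset α) (t : Finset β) (v : Finset γ) (f : α → β → γ → M) :
    ∑ a ∈ s, ∑ c ∈ t, ∑ y ∈ v, f a c y = ∑ y ∈ v, ∑ a ∈ s, ∑ c ∈ t, f a c y := by
  calc ∑ a ∈ s, ∑ c ∈ t, ∑ y ∈ v, f a c y
      = ∑ a ∈ s, ∑ y ∈ v, ∑ c ∈ t, f a c y :=
        Finset.sum_congr rfl (fun a _ => Finset.sum_comm)
    _ = ∑ y ∈ v, ∑ a ∈ s, ∑ c ∈ t, f a c y := Finset.sum_comm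

end comm

lemma SconjS [Fact p.Prime] (a c : ZMod p) :
    S p a c * (starRingEnd ℂ) (S p a c) =
      ∑ x ∈ X p, ∑ y ∈ X p, E p (a * (x - y)) * E p (c * (x⁻¹ - y⁻¹)) := by
  rw [S, map_sum, Finset.sum_mul_sum]
  refine Finset.sum_congr rfl fun x _ => Finset.sum_congr rfl fun y _ => ?_
  rw [conj_E, ← E_add, ← E_add]
  congr 1
  ring

lemma moment2 [Fact p.Prime] :
    ∑ a : ZMod p, ∑ c : ZMod p, S p a c * (starRingEnd ℂ) (S p a c) =
      (p : ℂ) ^ 2 * ((p : ℂ) - 1) := by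
  have hp1 : 1 ≤ p := Nat.one_le_iff_ne_zero.mpr (NeZero.ne p)
  calc ∑ a : ZMod p, ∑ c : ZMod p, S p a c * (starRingEnd ℂ) (S p a c)
      = ∑ a : ZMod p, ∑ c : ZMod p, ∑ x ∈ X p, ∑ y ∈ X p,
          E p (a * (x - y)) * E p (c * (x⁻¹ - y⁻¹)) :=
        Finset.sum_congr rfl fun a _ => Finset.sum_congr rfl fun c _ => SconjS p a c
    _ = ∑ x ∈ X p, ∑ a : ZMod p, ∑ c : ZMod p, ∑ y ∈ X p,
          E p (a * (x - y)) * E p (c * (x⁻¹ - y⁻¹)) := comm3 _ _ _ _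
    _ = ∑ x ∈ X p, ∑ y ∈ X p, ∑ a : ZMod p, ∑ c : ZMod p,
          E p (a * (x - y)) * E p (c * (x⁻¹ - y⁻¹)) :=
        Finset.sum_congr rfl fun x _ => comm3 _ _ _ _
    _ = ∑ x ∈ X p, ∑ y ∈ X p, (if x = y then (p : ℂ) ^ 2 else 0) := by
      refine Finset.sum_congr rfl fun x _ => Finset.sum_congr rfl fun y _ => ?_
      rw [← Finset.sum_mul_sum, sum_E_mul, sum_E_mul]
      by_cases h : x = y
      · subst h
        simp [sq]
      · rw [if_neg (sub_ne_zero.mpr h), zero_mul, if_neg h]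
    _ = ∑ x ∈ X p, (p : ℂ) ^ 2 := by
      refine Finset.sum_congr rfl fun x hx => ?_
      rw [Finset.sum_ite_eq, if_pos hx]
    _ = (p : ℂ) ^ 2 * ((p : ℂ) - 1) := by
      rw [Finset.sum_const, card_X, nsmul_eq_mul]
      push_cast [hp1]
      ring

variable {p}

lemma two_ne_zero' [Fact p.Prime] (hp2 : p ≠ 2) : (2 : ZMod p) ≠ 0 := by
  have : ((2 : ℕ) : ZMod p) = (2 : ZMod p) := by norm_cast
  rw [← this, Ne, ZMod.natCast_eq_zero_iff]
  intro hdvd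
  exact hp2 ((Nat.prime_dvd_prime_iff_eq (Fact.out : p.Prime) Nat.prime_two).mp hdvd)

lemma sum_pair [NeZero p] {r : ℂ} {u v : ZMod p} (hu : u ∈ X p) (hv : v ∈ X p) :
    ∑ y1 ∈ X p, ∑ y2 ∈ X p, (if y1 = u ∧ y2 = v then r else 0) = r := by
  have h1 : ∀ y1 ∈ X p, (∑ y2 ∈ X p, if y1 = u ∧ y2 = v then r else 0)
      = if y1 = u then r else 0 := by
    intro y1 _
    by_cases h : y1 = u
    · rw [if_pos h]
      have h2 : ∀ y2 ∈ X p, (if y1 = u ∧ y2 = v then r else 0) = if y2 = v then r else 0 :=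
        fun y2 _ => if_congr (by simp [h]) rfl rfl
      rw [Finset.sum_congr rfl h2, Finset.sum_ite_eq', if_pos hv]
    · simp [h]
  rw [Finset.sum_congr rfl h1, Finset.sum_ite_eq', if_pos hu]

lemma sum_diag [NeZero p] {r : ℂ} :
    ∑ y1 ∈ X p, ∑ y2 ∈ X p, (if y2 = -y1 then r else 0) = (((p : ℕ) - 1 : ℕ) : ℂ) * r := by
  have h1 : ∀ y1 ∈ X p, (∑ y2 ∈ X p, if y2 = -y1 then r else 0) = r := by
    intro y1 hy1
    rw [Finset.sum_ite_eq', if_pos]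
    rw [mem_X] at hy1 ⊢
    exact neg_ne_zero.mpr hy1
  rw [Finset.sum_congr rfl h1, Finset.sum_const, card_X, nsmul_eq_mul]

lemma cond_iff_neg [Fact p.Prime] {x1 x2 y1 y2 : ZMod p} (hx : x2 = -x1) :
    (x1 + x2 - y1 - y2 = 0 ∧ x1⁻¹ + x2⁻¹ - y1⁻¹ - y2⁻¹ = 0) ↔ y2 = -y1 := by
  subst hx
  constructor
  · rintro ⟨h1, -⟩
    linear_combination -h1
  · rintro rfl
    refine ⟨by ring, ?_⟩
    rw [inv_neg, inv_neg]
    ring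

lemma cond_iff_pair [Fact p.Prime] {x1 x2 y1 y2 : ZMod p}
    (hx1 : x1 ≠ 0) (hx2 : x2 ≠ 0) (hy1 : y1 ≠ 0) (hy2 : y2 ≠ 0) (hx : x2 ≠ -x1) :
    (x1 + x2 - y1 - y2 = 0 ∧ x1⁻¹ + x2⁻¹ - y1⁻¹ - y2⁻¹ = 0) ↔
      ((y1 = x1 ∧ y2 = x2) ∨ (y1 = x2 ∧ y2 = x1)) := by
  constructor
  · rintro ⟨h1, h2⟩
    have hs : x1 + x2 ≠ 0 := fun h => hx (by linear_combination h)
    have hsum : y1 + y2 = x1 + x2 := by linear_combination -h1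
    have e2 : (x1 + x2) * (y1 * y2) = (y1 + y2) * (x1 * x2) := by
      field_simp at h2
      linear_combination h2
    rw [hsum] at e2
    have hprod : y1 * y2 = x1 * x2 := mul_left_cancel₀ hs e2
    have hquad : (y1 - x1) * (y1 - x2) = 0 := by
      linear_combination y1 * hsum - hprod
    rcases mul_eq_zero.mp hquad with h | h
    · left
      have e1 : y1 = x1 := by linear_combination h
      exact ⟨e1, by linear_combination hsum - h⟩
    · right
      have e1 : y1 = x2 := by linear_combination h
      exact ⟨e1, by linear_combination hsum - h⟩
  · rintro (⟨rfl, rfl⟩ | ⟨rfl, rfl⟩)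
    · exact ⟨by ring, by ring⟩
    · exact ⟨by ring, by ring⟩

lemma inner2 [Fact p.Prime] (hp2 : p ≠ 2) {x1 x2 : ZMod p}
    (hx1 : x1 ∈ X p) (hx2 : x2 ∈ X p) :
    ∑ y1 ∈ X p, ∑ y2 ∈ X p,
        (if (x1 + x2 - y1 - y2 = 0 ∧ x1⁻¹ + x2⁻¹ - y1⁻¹ - y2⁻¹ = 0) then (p : ℂ) ^ 2 else 0)
      = if x2 = -x1 then ((p : ℂ) - 1) * (p : ℂ) ^ 2
        else (if x1 = x2 then (p : ℂ) ^ 2 else 2 * (p : ℂ) ^ 2) := by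
  have hp1 : 1 ≤ p := Nat.one_le_iff_ne_zero.mpr (NeZero.ne p)
  rw [mem_X] at hx1 hx2
  by_cases hneg : x2 = -x1
  · rw [if_pos hneg]
    have h1 : ∀ y1 ∈ X p, ∀ y2 ∈ X p,
        ((if (x1 + x2 - y1 - y2 = 0 ∧ x1⁻¹ + x2⁻¹ - y1⁻¹ - y2⁻¹ = 0) then (p : ℂ) ^ 2 else 0)
          = if y2 = -y1 then (p : ℂ) ^ 2 else 0) := by
      intro y1 _ y2 _
      rw [if_congr (cond_iff_neg hneg) rfl rfl]
    rw [Finset.sum_congr rfl fun y1 hy1 => Finset.sum_congr rfl fun y2 hy2 => h1 y1 hy1 y2 hy2]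
    rw [sum_diag]
    push_cast [hp1]
    ring
  · rw [if_neg hneg]
    have key : ∀ y1 ∈ X p, ∀ y2 ∈ X p,
        ((if (x1 + x2 - y1 - y2 = 0 ∧ x1⁻¹ + x2⁻¹ - y1⁻¹ - y2⁻¹ = 0) then (p : ℂ) ^ 2 else 0)
          = if ((y1 = x1 ∧ y2 = x2) ∨ (y1 = x2 ∧ y2 = x1)) then (p : ℂ) ^ 2 else 0) := by
      intro y1 hy1 y2 hy2
      rw [mem_X] at hy1 hy2
      rw [if_congr (cond_iff_pair hx1 hx2 hy1 hy2 hneg) rfl rfl]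
    rw [Finset.sum_congr rfl fun y1 hy1 => Finset.sum_congr rfl fun y2 hy2 => key y1 hy1 y2 hy2]
    by_cases hxx : x1 = x2
    · rw [if_pos hxx]
      subst hxx
      have h2 : ∀ y1 ∈ X p, ∀ y2 ∈ X p,
          ((if ((y1 = x1 ∧ y2 = x1) ∨ (y1 = x1 ∧ y2 = x1)) then (p : ℂ) ^ 2 else 0)
            = if (y1 = x1 ∧ y2 = x1) then (p : ℂ) ^ 2 else 0) := by
        intro y1 _ y2 _
        rw [if_congr (or_self_iff) rfl rfl]
      rw [Finset.sum_congr rfl fun y1 hy1 => Finset.sum_congr rfl fun y2 hy2 => h2 y1 hy1 y2 hy2]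
      exact sum_pair ((mem_X p).mpr hx1) ((mem_X p).mpr hx1)
    · rw [if_neg hxx]
      have h3 : ∀ y1 ∈ X p, ∀ y2 ∈ X p,
          ((if ((y1 = x1 ∧ y2 = x2) ∨ (y1 = x2 ∧ y2 = x1)) then (p : ℂ) ^ 2 else 0)
            = (if (y1 = x1 ∧ y2 = x2) then (p : ℂ) ^ 2 else 0)
              + (if (y1 = x2 ∧ y2 = x1) then (p : ℂ) ^ 2 else 0)) := by
        intro y1 _ y2 _
        by_cases hA : y1 = x1 ∧ y2 = x2
        · have hB : ¬(y1 = x2 ∧ y2 = x1) := by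
            rintro ⟨e1, -⟩
            exact hxx (hA.1 ▸ e1 ▸ rfl)
          rw [if_pos (Or.inl hA), if_pos hA, if_neg hB, add_zero]
        · by_cases hB : y1 = x2 ∧ y2 = x1
          · rw [if_pos (Or.inr hB), if_neg hA, if_pos hB, zero_add]
          · rw [if_neg (by tauto), if_neg hA, if_neg hB, add_zero]
      rw [Finset.sum_congr rfl fun y1 hy1 => Finset.sum_congr rfl fun y2 hy2 => h3 y1 hy1 y2 hy2]
      rw [show ∀ F G : ZMod p → ZMod p → ℂ,
          (∑ y1 ∈ X p, ∑ y2 ∈ X p, (F y1 y2 + G y1 y2))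
            = (∑ y1 ∈ X p, ∑ y2 ∈ X p, F y1 y2) + (∑ y1 ∈ X p, ∑ y2 ∈ X p, G y1 y2) from
        fun F G => by rw [← Finset.sum_add_distrib]; exact Finset.sum_congr rfl fun y1 _ => Finset.sum_add_distrib]
      rw [sum_pair ((mem_X p).mpr hx1) ((mem_X p).mpr hx2),
        sum_pair ((mem_X p).mpr hx2) ((mem_X p).mpr hx1)]
      ring

lemma count4 [Fact p.Prime] (hp2 : p ≠ 2) :
    ∑ x1 ∈ X p, ∑ x2 ∈ X p, ∑ y1 ∈ X p, ∑ y2 ∈ X p,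
        (if (x1 + x2 - y1 - y2 = 0 ∧ x1⁻¹ + x2⁻¹ - y1⁻¹ - y2⁻¹ = 0) then (p : ℂ) ^ 2 else 0)
      = ((p : ℂ) - 1) * (3 * (p : ℂ) - 6) * (p : ℂ) ^ 2 := by
  have hp1 : 1 ≤ p := Nat.one_le_iff_ne_zero.mpr (NeZero.ne p)
  rw [Finset.sum_congr rfl fun x1 hx1 => Finset.sum_congr rfl fun x2 hx2 =>
    inner2 hp2 hx1 hx2]
  have hg : ∀ x1 ∈ X p, ∀ x2 ∈ X p,
      ((if x2 = -x1 then ((p : ℂ) - 1) * (p : ℂ) ^ 2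
        else (if x1 = x2 then (p : ℂ) ^ 2 else 2 * (p : ℂ) ^ 2))
      = 2 * (p : ℂ) ^ 2 + (if x2 = -x1 then ((p : ℂ) - 3) * (p : ℂ) ^ 2 else 0)
        + (if x1 = x2 then -(p : ℂ) ^ 2 else 0)) := by
    intro x1 hx1 x2 hx2
    rw [mem_X] at hx1 hx2
    by_cases h1 : x2 = -x1
    · have h2 : x1 ≠ x2 := by
        intro e
        have h2x : (2 : ZMod p) * x1 = 0 := by linear_combination h1 + e
        rcases mul_eq_zero.mp h2x with h | h
        · exact two_ne_zero' hp2 h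
        · exact hx1 h
      rw [if_pos h1, if_neg h2, if_pos h1]
      ring
    · rw [if_neg h1, if_neg h1]
      by_cases h2 : x1 = x2
      · rw [if_pos h2, if_pos h2]
        ring
      · rw [if_neg h2, if_neg h2]
        ring
  rw [Finset.sum_congr rfl fun x1 hx1 => Finset.sum_congr rfl fun x2 hx2 => hg x1 hx1 x2 hx2]
  have hrow : ∀ x1 ∈ X p,
      (∑ x2 ∈ X p, (2 * (p : ℂ) ^ 2 + (if x2 = -x1 then ((p : ℂ) - 3) * (p : ℂ) ^ 2 else 0)
        + (if x1 = x2 then -(p : ℂ) ^ 2 else 0)))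
      = (3 * (p : ℂ) - 6) * (p : ℂ) ^ 2 := by
    intro x1 hx1
    rw [Finset.sum_add_distrib, Finset.sum_add_distrib]
    rw [Finset.sum_const, card_X, nsmul_eq_mul]
    rw [Finset.sum_ite_eq', if_pos (by rw [mem_X] at hx1 ⊢; exact neg_ne_zero.mpr hx1)]
    rw [Finset.sum_ite_eq, if_pos hx1]
    push_cast [hp1]
    ring
  rw [Finset.sum_congr rfl hrow, Finset.sum_const, card_X, nsmul_eq_mul]
  push_cast [hp1]
  ring

lemma moment4 [Fact p.Prime] (hp2 : p ≠ 2) :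
    ∑ a : ZMod p, ∑ c : ZMod p, (S p a c * (starRingEnd ℂ) (S p a c)) ^ 2
      = ((p : ℂ) - 1) * (3 * (p : ℂ) - 6) * (p : ℂ) ^ 2 := by
  have step1 : ∀ a c : ZMod p, (S p a c * (starRingEnd ℂ) (S p a c)) ^ 2
      = ∑ x1 ∈ X p, ∑ x2 ∈ X p, ∑ y1 ∈ X p, ∑ y2 ∈ X p,
          E p (a * (x1 + x2 - y1 - y2)) * E p (c * (x1⁻¹ + x2⁻¹ - y1⁻¹ - y2⁻¹)) := by
    intro a c
    rw [SconjS, sq, Finset.sum_mul_sum]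
    refine Finset.sum_congr rfl fun x1 _ => Finset.sum_congr rfl fun x2 _ => ?_
    rw [Finset.sum_mul_sum]
    refine Finset.sum_congr rfl fun y1 _ => Finset.sum_congr rfl fun y2 _ => ?_
    rw [mul_mul_mul_comm, ← E_add, ← E_add]
    congr 1
    · congr 1
      ring
    · congr 1
      ring
  calc ∑ a : ZMod p, ∑ c : ZMod p, (S p a c * (starRingEnd ℂ) (S p a c)) ^ 2
      = ∑ a : ZMod p, ∑ c : ZMod p, ∑ x1 ∈ X p, ∑ x2 ∈ X p, ∑ y1 ∈ X p, ∑ y2 ∈ X p,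
          E p (a * (x1 + x2 - y1 - y2)) * E p (c * (x1⁻¹ + x2⁻¹ - y1⁻¹ - y2⁻¹)) :=
        Finset.sum_congr rfl fun a _ => Finset.sum_congr rfl fun c _ => step1 a c
    _ = ∑ x1 ∈ X p, ∑ a : ZMod p, ∑ c : ZMod p, ∑ x2 ∈ X p, ∑ y1 ∈ X p, ∑ y2 ∈ X p,
          E p (a * (x1 + x2 - y1 - y2)) * E p (c * (x1⁻¹ + x2⁻¹ - y1⁻¹ - y2⁻¹)) :=
        comm3 _ _ _ _
    _ = ∑ x1 ∈ X p, ∑ x2 ∈ X p, ∑ a : ZMod p, ∑ c : ZMod p, ∑ y1 ∈ X p, ∑ y2 ∈ X p,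
          E p (a * (x1 + x2 - y1 - y2)) * E p (c * (x1⁻¹ + x2⁻¹ - y1⁻¹ - y2⁻¹)) :=
        Finset.sum_congr rfl fun x1 _ => comm3 _ _ _ _
    _ = ∑ x1 ∈ X p, ∑ x2 ∈ X p, ∑ y1 ∈ X p, ∑ a : ZMod p, ∑ c : ZMod p, ∑ y2 ∈ X p,
          E p (a * (x1 + x2 - y1 - y2)) * E p (c * (x1⁻¹ + x2⁻¹ - y1⁻¹ - y2⁻¹)) :=
        Finset.sum_congr rfl fun x1 _ => Finset.sum_congr rfl fun x2 _ => comm3 _ _ _ _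
    _ = ∑ x1 ∈ X p, ∑ x2 ∈ X p, ∑ y1 ∈ X p, ∑ y2 ∈ X p, ∑ a : ZMod p, ∑ c : ZMod p,
          E p (a * (x1 + x2 - y1 - y2)) * E p (c * (x1⁻¹ + x2⁻¹ - y1⁻¹ - y2⁻¹)) :=
        Finset.sum_congr rfl fun x1 _ => Finset.sum_congr rfl fun x2 _ =>
          Finset.sum_congr rfl fun y1 _ => comm3 _ _ _ _
    _ = ∑ x1 ∈ X p, ∑ x2 ∈ X p, ∑ y1 ∈ X p, ∑ y2 ∈ X p,
          (if (x1 + x2 - y1 - y2 = 0 ∧ x1⁻¹ + x2⁻¹ - y1⁻¹ - y2⁻¹ = 0) then (p : ℂ) ^ 2 else 0) := by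
      refine Finset.sum_congr rfl fun x1 _ => Finset.sum_congr rfl fun x2 _ =>
        Finset.sum_congr rfl fun y1 _ => Finset.sum_congr rfl fun y2 _ => ?_
      rw [← Finset.sum_mul_sum, sum_E_mul, sum_E_mul]
      by_cases h1 : x1 + x2 - y1 - y2 = 0
      · by_cases h2 : x1⁻¹ + x2⁻¹ - y1⁻¹ - y2⁻¹ = 0
        · rw [if_pos h1, if_pos h2, if_pos ⟨h1, h2⟩, sq]
        · rw [if_pos h1, if_neg h2, if_neg (by tauto), mul_zero]
      · rw [if_neg h1, zero_mul, if_neg (by tauto)]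
    _ = ((p : ℂ) - 1) * (3 * (p : ℂ) - 6) * (p : ℂ) ^ 2 := count4 hp2

lemma Nsq_real_m2 [Fact p.Prime] :
    ∑ u : ZMod p, ∑ v : ZMod p, Complex.normSq (S p u v) = (p : ℝ) ^ 2 * ((p : ℝ) - 1) := by
  have h : ((∑ u : ZMod p, ∑ v : ZMod p, Complex.normSq (S p u v) : ℝ) : ℂ)
      = (((p : ℝ) ^ 2 * ((p : ℝ) - 1) : ℝ) : ℂ) := by
    push_cast
    rw [← moment2 p]
    exact Finset.sum_congr rfl fun u _ => Finset.sum_congr rfl fun v _ =>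
      (Complex.mul_conj _).symm
  exact_mod_cast h

lemma Nsq_real_m4 [Fact p.Prime] (hp2 : p ≠ 2) :
    ∑ u : ZMod p, ∑ v : ZMod p, (Complex.normSq (S p u v)) ^ 2
      = ((p : ℝ) - 1) * (3 * (p : ℝ) - 6) * (p : ℝ) ^ 2 := by
  have h : ((∑ u : ZMod p, ∑ v : ZMod p, (Complex.normSq (S p u v)) ^ 2 : ℝ) : ℂ)
      = ((((p : ℝ) - 1) * (3 * (p : ℝ) - 6) * (p : ℝ) ^ 2 : ℝ) : ℂ) := by
    push_cast
    rw [← moment4 hp2]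
    refine Finset.sum_congr rfl fun u _ => Finset.sum_congr rfl fun v _ => ?_
    rw [Complex.mul_conj]
  exact_mod_cast h

lemma total_sum [Fact p.Prime] (hp2 : p ≠ 2) :
    ∑ u : ZMod p, ∑ v : ZMod p, (Complex.normSq (S p u v) - (p : ℝ)) ^ 2
      = (p : ℝ) ^ 2 * (2 * (p : ℝ) ^ 2 - 7 * (p : ℝ) + 6) := by
  have e1 : ∀ u : ZMod p, ∑ v : ZMod p, (Complex.normSq (S p u v) - (p : ℝ)) ^ 2
      = (∑ v : ZMod p, (Complex.normSq (S p u v)) ^ 2)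
        - 2 * (p : ℝ) * (∑ v : ZMod p, Complex.normSq (S p u v)) + (p : ℝ) * (p : ℝ) ^ 2 := by
    intro u
    have h : ∀ v : ZMod p, (Complex.normSq (S p u v) - (p : ℝ)) ^ 2
        = (Complex.normSq (S p u v)) ^ 2 - 2 * (p : ℝ) * (Complex.normSq (S p u v)) + (p : ℝ) ^ 2 :=
      fun v => by ring
    rw [Finset.sum_congr rfl fun v _ => h v, Finset.sum_add_distrib, Finset.sum_sub_distrib,
      ← Finset.mul_sum, Finset.sum_const, Finset.card_univ, ZMod.card, nsmul_eq_mul]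
  rw [Finset.sum_congr rfl fun u _ => e1 u, Finset.sum_add_distrib, Finset.sum_sub_distrib,
    ← Finset.mul_sum, Finset.sum_const, Finset.card_univ, ZMod.card, nsmul_eq_mul,
    Nsq_real_m2, Nsq_real_m4 hp2]
  ring

lemma pointwise_bound [Fact p.Prime] (hp2 : p ≠ 2) {A B : ZMod p} (hA : A ≠ 0) (hB : B ≠ 0) :
    (Complex.normSq (S p A B) - (p : ℝ)) ^ 2 ≤ (p : ℝ) ^ 3 := by
  have hp' : p.Prime := Fact.out
  have hp3 : (3 : ℝ) ≤ (p : ℝ) := by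
    have h2 := hp'.two_le
    have : 3 ≤ p := by omega
    exact_mod_cast this
  have hp1 : 1 ≤ p := le_trans (by norm_num) hp'.two_le
  set G : ZMod p → ZMod p → ℝ := fun u v => (Complex.normSq (S p u v) - (p : ℝ)) ^ 2 with hG
  have hGu0 : ∀ u : ZMod p, u ≠ 0 → G u 0 = (1 - (p : ℝ)) ^ 2 := by
    intro u hu
    rw [hG]
    simp only
    rw [S_a_zero p hu]
    norm_num
  have hG0v : ∀ v : ZMod p, v ≠ 0 → G 0 v = (1 - (p : ℝ)) ^ 2 := by
    intro v hv
    rw [hG]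
    simp only
    rw [S_zero_c p hv]
    norm_num
  have hG00 : G 0 0 = (((p : ℝ) - 1) ^ 2 - (p : ℝ)) ^ 2 := by
    rw [hG]
    simp only
    rw [S_zero_zero]
    rw [show ((p : ℂ) - 1) = (((p : ℝ) - 1 : ℝ) : ℂ) by push_cast; ring, Complex.normSq_ofReal]
    ring_nf
  -- splitting the total sum
  have split2 : ∀ u : ZMod p, ∑ v : ZMod p, G u v = (∑ v ∈ X p, G u v) + G u 0 := by
    intro u
    rw [X_def]
    exact (Finset.sum_erase_add _ _ (Finset.mem_univ 0)).symm
  have split1 : ∑ u : ZMod p, ∑ v : ZMod p, G u v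
      = (∑ u ∈ X p, ∑ v : ZMod p, G u v) + ∑ v : ZMod p, G 0 v := by
    rw [X_def]
    exact (Finset.sum_erase_add _ _ (Finset.mem_univ 0)).symm
  have hXX : ∑ u ∈ X p, ∑ v ∈ X p, G u v
      = (p : ℝ) ^ 2 * (2 * (p : ℝ) ^ 2 - 7 * (p : ℝ) + 6)
        - 2 * ((p : ℝ) - 1) * (1 - (p : ℝ)) ^ 2 - (((p : ℝ) - 1) ^ 2 - (p : ℝ)) ^ 2 := by
    have t := total_sum hp2
    rw [split1] at t
    rw [Finset.sum_congr rfl fun u _ => split2 u, Finset.sum_add_distrib] at t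
    rw [Finset.sum_congr rfl (fun u hu => hGu0 u ((mem_X p).mp hu)), Finset.sum_const,
      card_X, nsmul_eq_mul] at t
    rw [split2 0, Finset.sum_congr rfl (fun v hv => hG0v v ((mem_X p).mp hv)),
      Finset.sum_const, card_X, nsmul_eq_mul, hG00] at t
    have hcast : (((p : ℕ) - 1 : ℕ) : ℝ) = (p : ℝ) - 1 := by
      push_cast [hp1]
      ring
    rw [hcast] at t
    linarith [t]
  -- each row bounds G A B
  have hrow : ∀ u ∈ X p, G A B ≤ ∑ v ∈ X p, G u v := by
    intro u hu
    rw [mem_X] at hu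
    have hmem : u⁻¹ * (A * B) ∈ X p :=
      (mem_X p).mpr (mul_ne_zero (inv_ne_zero hu) (mul_ne_zero hA hB))
    have hval : G u (u⁻¹ * (A * B)) = G A B := by
      rw [hG]
      simp only
      rw [S_mul p hu, S_mul p hA]
      congr 3
      field_simp
    calc G A B = G u (u⁻¹ * (A * B)) := hval.symm
      _ ≤ ∑ v ∈ X p, G u v := Finset.single_le_sum (f := G u) (fun v _ => show 0 ≤ G u v from sq_nonneg _) hmem
  have hXbound : ((p : ℝ) - 1) * G A B ≤ ∑ u ∈ X p, ∑ v ∈ X p, G u v := by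
    have hcast : (((p : ℕ) - 1 : ℕ) : ℝ) = (p : ℝ) - 1 := by
      push_cast [hp1]
      ring
    calc ((p : ℝ) - 1) * G A B = ∑ _u ∈ X p, G A B := by
          rw [Finset.sum_const, card_X, nsmul_eq_mul, hcast]
      _ ≤ ∑ u ∈ X p, ∑ v ∈ X p, G u v := Finset.sum_le_sum hrow
  have hfinal : ((p : ℝ) - 1) * G A B ≤ ((p : ℝ) - 1) * (p : ℝ) ^ 3 := by
    rw [hXX] at hXbound
    nlinarith [hp3]
  have hppos : (0 : ℝ) < (p : ℝ) - 1 := by linarith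
  exact le_of_mul_le_mul_left hfinal hppos

end KloostAux
end

theorem stmt15 (p : ℕ) (hp : p.Prime) (hp2 : p ≠ 2) (a b : ℤ)
    (ha : ¬ (p : ℤ) ∣ a) (hb : ¬ (p : ℤ) ∣ b) :
    ‖Kl p a b‖ ^ 2 ≤ (p : ℝ) + (p : ℝ) ^ ((3 : ℝ) / 2) := by
  haveI : Fact p.Prime := ⟨hp⟩
  have hA : (a : ZMod p) ≠ 0 := by
    rw [Ne, ZMod.intCast_zmod_eq_zero_iff_dvd]
    exact ha
  have hB : (b : ZMod p) ≠ 0 := by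
    rw [Ne, ZMod.intCast_zmod_eq_zero_iff_dvd]
    exact hb
  have key := KloostAux.pointwise_bound hp2 hA hB
  rw [Complex.sq_norm, KloostAux.Kl_eq]
  have h1 : Real.sqrt (((Complex.normSq (KloostAux.S p (a : ZMod p) (b : ZMod p)) - (p : ℝ)) ^ 2))
      ≤ Real.sqrt ((p : ℝ) ^ 3) := Real.sqrt_le_sqrt key
  rw [Real.sqrt_sq_eq_abs] at h1
  have h2 : Complex.normSq (KloostAux.S p (a : ZMod p) (b : ZMod p)) - (p : ℝ)
      ≤ Real.sqrt ((p : ℝ) ^ 3) := le_trans (le_abs_self _) h1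
  have h3 : Real.sqrt ((p : ℝ) ^ 3) = (p : ℝ) ^ ((3 : ℝ) / 2) := by
    rw [Real.sqrt_eq_rpow]
    rw [show ((p : ℝ) ^ 3) = (p : ℝ) ^ ((3 : ℕ) : ℝ) by rw [Real.rpow_natCast]]
    rw [← Real.rpow_mul (Nat.cast_nonneg p)]
    norm_num
  rw [h3] at h2
  linarith
end
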